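/- arXiv:math/0602659 — 6 statements merged into one kernel-verified Lean document; each statement's English description precedes it below -/
import Mathlib

section
/- Let f : ℝ → ℝ be a continuously differentiable probability density such that f and f' are integrable on ℝ and f(x) → 0 as |x| → ∞, and let F(u) = ∫_{−∞}^{u} f(x) dx be its cumulative distribution function. Then for every λ ∈ ℝ and every u ∈ ℝ one has iλ · ∫_ℝ e^{iλx} f(x) (1_{x<u} − F(u)) dx = e^{iλu} f(u) − ∫_ℝ e^{iλx} f'(x) (1_{x<u} − F(u)) dx. -/
open MeasureTheory Filter

/-- Integration-by-parts identity for the Fourier-type integral against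
`f(x) (1_{x<u} - F(u))`, where `F` is the CDF of the density `f`. -/
theorem stmt0 (f : ℝ → ℝ)
    (hf_smooth : ContDiff ℝ 1 f)
    (hf_nonneg : ∀ x, 0 ≤ f x)
    (hf_int : Integrable f)
    (hf_prob : (∫ x : ℝ, f x) = 1)
    (hf'_int : Integrable (deriv f))
    (hf_tendsto : Tendsto f (cocompact ℝ) (nhds 0))
    (F : ℝ → ℝ) (hF : ∀ u, F u = ∫ x in Set.Iio u, f x) :
    ∀ (l u : ℝ),
      Complex.I * (l : ℂ) *
          ∫ x : ℝ, Complex.exp (Complex.I * l * x) * (f x : ℂ) *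
            ((if x < u then (1 : ℂ) else 0) - (F u : ℂ))
        = Complex.exp (Complex.I * l * u) * (f u : ℂ) -
          ∫ x : ℝ, Complex.exp (Complex.I * l * x) * ((deriv f x : ℝ) : ℂ) *
            ((if x < u then (1 : ℂ) else 0) - (F u : ℂ)) := by
  intro l u
  set e : ℝ → ℂ := fun x => Complex.exp (Complex.I * l * x) with he
  have hediff : ∀ x : ℝ, HasDerivAt e (Complex.I * l * e x) x := by
    intro x
    have h0 : HasDerivAt (fun x : ℝ => (x : ℂ)) 1 x := by
      simpa using (hasDerivAt_id x).ofReal_comp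
    have h1 : HasDerivAt (fun x : ℝ => Complex.I * l * (x : ℂ)) (Complex.I * l) x := by
      simpa using h0.const_mul (Complex.I * (l : ℂ))
    simpa [he, mul_comm] using h1.cexp
  have hfd : ∀ x : ℝ, HasDerivAt (fun x => ((f x : ℝ) : ℂ)) ((deriv f x : ℝ) : ℂ) x := by
    intro x
    exact ((hf_smooth.differentiable one_ne_zero x).hasDerivAt).ofReal_comp
  have hG : ∀ x : ℝ, HasDerivAt (fun x => e x * (f x : ℂ))
      (Complex.I * l * (e x * f x) + e x * ((deriv f x : ℝ) : ℂ)) x := by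
    intro x
    have := (hediff x).mul (hfd x)
    convert this using 1
    all_goals first | rfl | ring
  have hemeas : Continuous e := by fun_prop
  have hbd : ∀ x : ℝ, ‖e x‖ = 1 := by
    intro x
    simp [he, Complex.norm_exp, Complex.mul_re]
  have hint : ∀ (g : ℝ → ℝ), Integrable g → Integrable (fun x => e x * (g x : ℂ)) := by
    intro g hg
    refine Integrable.bdd_mul (c := 1) (hg.ofReal) hemeas.aestronglyMeasurable ?_
    filter_upwards with x
    rw [hbd x]
  have hintf := hint f hf_int
  have hintf' := hint (deriv f) hf'_int
  have hnorm : ∀ x : ℝ, ‖e x * (f x : ℂ)‖ = |f x| := by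
    intro x
    rw [norm_mul, hbd x, one_mul, Complex.norm_real, Real.norm_eq_abs]
  have htend : ∀ (ll : Filter ℝ), Tendsto f ll (nhds 0) →
      Tendsto (fun x => e x * (f x : ℂ)) ll (nhds 0) := by
    intro ll h
    rw [tendsto_zero_iff_norm_tendsto_zero]
    have : Tendsto (fun x => |f x|) ll (nhds 0) := by simpa using h.abs
    exact this.congr (fun x => (hnorm x).symm)
  have hbot : Tendsto (fun x => e x * (f x : ℂ)) atBot (nhds 0) :=
    htend _ (hf_tendsto.mono_left (atBot_le_cocompact))
  have htop : Tendsto (fun x => e x * (f x : ℂ)) atTop (nhds 0) :=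
    htend _ (hf_tendsto.mono_left (atTop_le_cocompact))
  have hintsum : Integrable
      (fun x => Complex.I * l * (e x * (f x : ℂ)) + e x * ((deriv f x : ℝ) : ℂ)) :=
    (hintf.const_mul _).add hintf'
  -- FTC on the two half-lines
  have key1 : Complex.I * l * (∫ x in Set.Iio u, e x * (f x : ℂ))
      = e u * f u - ∫ x in Set.Iio u, e x * ((deriv f x : ℝ) : ℂ) := by
    have h := integral_Iic_of_hasDerivAt_of_tendsto' (a := u)
      (f := fun x => e x * (f x : ℂ))
      (f' := fun x => Complex.I * l * (e x * (f x : ℂ)) + e x * ((deriv f x : ℝ) : ℂ))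
      (fun x _ => hG x) hintsum.integrableOn hbot
    rw [integral_add ((hintf.const_mul _).integrableOn) hintf'.integrableOn,
      integral_const_mul, sub_zero, integral_Iic_eq_integral_Iio, integral_Iic_eq_integral_Iio] at h
    linear_combination h
  have key2 : Complex.I * l * (∫ x in Set.Ioi u, e x * (f x : ℂ))
      = -(e u * f u) - ∫ x in Set.Ioi u, e x * ((deriv f x : ℝ) : ℂ) := by
    have h := integral_Ioi_of_hasDerivAt_of_tendsto' (a := u)
      (f := fun x => e x * (f x : ℂ))
      (f' := fun x => Complex.I * l * (e x * (f x : ℂ)) + e x * ((deriv f x : ℝ) : ℂ))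
      (fun x _ => hG x) hintsum.integrableOn htop
    rw [integral_add ((hintf.const_mul _).integrableOn) hintf'.integrableOn,
      integral_const_mul, zero_sub] at h
    linear_combination h
  have hsplit : ∀ g : ℝ → ℝ, Integrable g →
      (∫ x : ℝ, Complex.exp (Complex.I * l * x) * (g x : ℂ) *
          ((if x < u then (1 : ℂ) else 0) - (F u : ℂ)))
        = (1 - (F u : ℂ)) * (∫ x in Set.Iio u, e x * (g x : ℂ))
          - (F u : ℂ) * ∫ x in Set.Ioi u, e x * (g x : ℂ) := by
    intro g hg
    have hcmeas : AEStronglyMeasurable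
        (fun x : ℝ => ((if x < u then (1 : ℂ) else 0) - (F u : ℂ))) volume := by
      refine AEStronglyMeasurable.sub ?_ aestronglyMeasurable_const
      exact ((measurable_const.ite measurableSet_Iio measurable_const)).aestronglyMeasurable
    have hbound : ∀ᵐ x : ℝ, ‖(if x < u then (1 : ℂ) else 0) - (F u : ℂ)‖ ≤ 1 + |F u| := by
      filter_upwards with x
      refine (norm_sub_le _ _).trans ?_
      have h1 : ‖(if x < u then (1 : ℂ) else 0)‖ ≤ 1 := by split <;> simp
      have h2 : ‖((F u : ℝ) : ℂ)‖ = |F u| := by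
        rw [Complex.norm_real, Real.norm_eq_abs]
      linarith
    have hig0 : Integrable (fun x : ℝ =>
        ((if x < u then (1 : ℂ) else 0) - (F u : ℂ)) * (e x * (g x : ℂ))) :=
      Integrable.bdd_mul (hint g hg) hcmeas hbound
    have heq : (fun x : ℝ => Complex.exp (Complex.I * l * x) * (g x : ℂ) *
        ((if x < u then (1 : ℂ) else 0) - (F u : ℂ)))
        = fun x : ℝ => ((if x < u then (1 : ℂ) else 0) - (F u : ℂ)) * (e x * (g x : ℂ)) :=
      funext fun x => by simp only [he]; ring
    have hig : Integrable (fun x : ℝ => Complex.exp (Complex.I * l * x) * (g x : ℂ) *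
        ((if x < u then (1 : ℂ) else 0) - (F u : ℂ))) := by
      rw [heq]; exact hig0
    rw [← integral_add_compl (measurableSet_Iio (a := u)) hig, Set.compl_Iio]
    have e1 : (∫ x in Set.Iio u, Complex.exp (Complex.I * l * x) * (g x : ℂ) *
        ((if x < u then (1 : ℂ) else 0) - (F u : ℂ)))
        = (1 - (F u : ℂ)) * ∫ x in Set.Iio u, e x * (g x : ℂ) := by
      rw [← integral_const_mul]
      refine setIntegral_congr_fun measurableSet_Iio fun x hx => ?_
      have : x < u := hx
      simp only [this, if_pos]
      ring
    have e2 : (∫ x in Set.Ici u, Complex.exp (Complex.I * l * x) * (g x : ℂ) *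
        ((if x < u then (1 : ℂ) else 0) - (F u : ℂ)))
        = -((F u : ℂ) * ∫ x in Set.Ioi u, e x * (g x : ℂ)) := by
      rw [← integral_Ici_eq_integral_Ioi, ← integral_const_mul, ← integral_neg]
      refine setIntegral_congr_fun measurableSet_Ici fun x hx => ?_
      have : ¬ x < u := not_lt.mpr hx
      simp only [this, if_neg, if_false]
      ring
    rw [e1, e2]
    ring
  rw [hsplit f hf_int, hsplit (deriv f) hf'_int]
  have heu : Complex.exp (Complex.I * l * u) = e u := rfl
  rw [heu]
  linear_combination (1 - (F u : ℂ)) * key1 - (F u : ℂ) * key2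
end

section
/- Let S : ℝ → ℝ be continuous and satisfy the drift tail condition. Then there exist constants C > 0 and γ > 0 such that G_S(x) = exp(2∫_0^x S(t) dt) satisfies G_S(x) ≤ C e^{−γ|x|} for all x ∈ ℝ; in particular, G_S is integrable on ℝ. -/
open MeasureTheory

lemma aux_integrable_exp_neg_abs {γ : ℝ} (hγ : 0 < γ) :
    Integrable (fun x : ℝ => Real.exp (-γ * |x|)) := by
  have hIoi : IntegrableOn (fun x : ℝ => Real.exp (-γ * |x|)) (Set.Ioi 0) := by
    refine (exp_neg_integrableOn_Ioi 0 hγ).congr_fun (fun x hx => ?_) measurableSet_Ioi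
    rw [abs_of_pos hx]
  have hIic : IntegrableOn (fun x : ℝ => Real.exp (-γ * |x|)) (Set.Iic 0) := by
    rw [← Measure.map_neg_eq_self (volume : Measure ℝ)]
    have m : MeasurableEmbedding fun x : ℝ => -x :=
      (Homeomorph.neg ℝ).measurableEmbedding
    rw [m.integrableOn_map_iff]
    simp_rw [Function.comp_def, abs_neg, Set.neg_preimage, Set.neg_Iic, neg_zero]
    exact Iff.mpr integrableOn_Ici_iff_integrableOn_Ioi hIoi
  rw [← integrableOn_univ, ← Set.Iic_union_Ioi (a := (0:ℝ))]
  exact hIic.union hIoi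

/-- Under the drift tail condition, `G_S(x) = exp(2∫_0^x S)` has exponentially small
tails and is integrable on ℝ. -/
theorem stmt4 (S : ℝ → ℝ) (hS : Continuous S)
    (htail : ∃ A ≥ (0 : ℝ), ∃ c > (0 : ℝ),
      (∀ x ≥ A, S x ≤ -c) ∧ (∀ x ≤ -A, c ≤ S x)) :
    ∃ C > (0 : ℝ), ∃ γ > (0 : ℝ),
      (∀ x : ℝ, Real.exp (2 * ∫ t in (0:ℝ)..x, S t) ≤ C * Real.exp (-γ * |x|)) ∧
      Integrable (fun x : ℝ => Real.exp (2 * ∫ t in (0:ℝ)..x, S t)) := by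
  obtain ⟨A, hA, c, hc, h1, h2⟩ := htail
  set F : ℝ → ℝ := fun x => ∫ t in (0:ℝ)..x, S t with hF
  have hFcont : Continuous F :=
    intervalIntegral.continuous_primitive (fun a b => hS.intervalIntegrable a b) 0
  set g : ℝ → ℝ := fun x => Real.exp (2 * F x + 2 * c * |x|) with hg
  have hgcont : Continuous g := by
    exact (Real.continuous_exp.comp
      (((continuous_const.mul hFcont).add (continuous_const.mul continuous_abs))))
  obtain ⟨x₀, hx₀mem, hx₀'⟩ := (isCompact_Icc (a := -A) (b := A)).exists_isMaxOn
    ⟨A, by constructor <;> linarith⟩ hgcont.continuousOn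
  have hx₀ : ∀ x ∈ Set.Icc (-A) A, g x ≤ g x₀ := fun x hx => hx₀' hx
  -- key bound : g x ≤ g x₀ for all x
  have hbound : ∀ x : ℝ, g x ≤ g x₀ := by
    intro x
    rcases le_or_gt x A with hxA | hxA
    · rcases le_or_gt (-A) x with hxA' | hxA'
      · exact hx₀ x ⟨hxA', hxA⟩
      · -- x < -A
        have hxle : x ≤ -A := hxA'.le
        have hsplit : F x + (∫ t in x..(-A), S t) = F (-A) :=
          intervalIntegral.integral_add_adjacent_intervals
            (hS.intervalIntegrable 0 x) (hS.intervalIntegrable x (-A))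
        have hineq : c * (-A - x) ≤ ∫ t in x..(-A), S t := by
          have hmono := intervalIntegral.integral_mono_on hxle
            (intervalIntegrable_const (c := c) (μ := volume)) (hS.intervalIntegrable x (-A))
            (fun t ht => h2 t ht.2)
          rw [intervalIntegral.integral_const] at hmono
          simpa [smul_eq_mul, mul_comm] using hmono
        have hFx : F x ≤ F (-A) - c * (-A - x) := by linarith
        have habs : |x| = -x := abs_of_neg (by linarith)
        have habsA : |(-A)| = A := by rw [abs_neg, abs_of_nonneg hA]
        have : g x ≤ g (-A) := by
          rw [hg]
          apply Real.exp_le_exp.mpr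
          rw [habs, habsA]
          nlinarith
        exact this.trans (hx₀ (-A) ⟨le_refl _, by linarith⟩)
    · -- x > A
      have hxge : A ≤ x := hxA.le
      have hsplit : F A + (∫ t in A..x, S t) = F x :=
        intervalIntegral.integral_add_adjacent_intervals
          (hS.intervalIntegrable 0 A) (hS.intervalIntegrable A x)
      have hineq : (∫ t in A..x, S t) ≤ -c * (x - A) := by
        have hmono := intervalIntegral.integral_mono_on hxge
          (hS.intervalIntegrable A x) (intervalIntegrable_const (c := -c) (μ := volume))
          (fun t ht => h1 t ht.1)
        rw [intervalIntegral.integral_const] at hmono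
        simpa [smul_eq_mul, mul_comm] using hmono
      have hFx : F x ≤ F A - c * (x - A) := by nlinarith
      have habs : |x| = x := abs_of_pos (by linarith)
      have habsA : |A| = A := abs_of_nonneg hA
      have : g x ≤ g A := by
        rw [hg]
        apply Real.exp_le_exp.mpr
        rw [habs, habsA]
        nlinarith
      exact this.trans (hx₀ A ⟨by linarith, le_refl _⟩)
  have hmain : ∀ x : ℝ, Real.exp (2 * F x) ≤ g x₀ * Real.exp (-(2 * c) * |x|) := by
    intro x
    have : Real.exp (2 * F x) = g x * Real.exp (-(2 * c) * |x|) := by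
      rw [hg, ← Real.exp_add]
      ring_nf
    rw [this]
    exact mul_le_mul_of_nonneg_right (hbound x) (Real.exp_pos _).le
  refine ⟨g x₀, Real.exp_pos _, 2 * c, by linarith, hmain, ?_⟩
  refine Integrable.mono' ((aux_integrable_exp_neg_abs (by linarith : (0:ℝ) < 2 * c)).const_mul
    (g x₀)) ?_ ?_
  · exact (Real.continuous_exp.comp (continuous_const.mul hFcont)).aestronglyMeasurable
  · filter_upwards with x
    rw [Real.norm_eq_abs, abs_of_pos (Real.exp_pos _)]
    exact hmain x
end

section
/- Let k ≥ 1 be an integer and let S : ℝ → ℝ be (k+1)-times continuously differentiable, satisfy the drift tail condition, and suppose there exist C₀ > 0 and ν ≥ 0 such that |S^{(k+1)}(x)| ≤ C₀(1 + |x|^ν) for all x ∈ ℝ. Let φ(λ) = ∫_ℝ e^{iλx} f_S(x) dx be the Fourier transform of the invariant density f_S. Then ∫_ℝ |λ|^{2k+4} |φ(λ)|² dλ < ∞. -/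
open MeasureTheory Real FourierTransform Complex Filter Finset intervalIntegral

lemma poly_le_exp (N : ℕ) {c : ℝ} (hc : 0 < c) :
    ∃ C > 0, ∀ u : ℝ, 0 ≤ u → (1 + u) ^ N ≤ C * Real.exp (c * u) := by
  rcases Nat.eq_zero_or_pos N with hN | hN
  · refine ⟨1, one_pos, fun u hu => ?_⟩
    simp only [hN, pow_zero, one_mul]
    exact Real.one_le_exp (by positivity)
  · set a : ℝ := c / N with ha
    have ha0 : 0 < a := by positivity
    refine ⟨(1 + 1 / a) ^ N, by positivity, fun u hu => ?_⟩
    have hau : 0 ≤ a * u := by positivity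
    have h1a : 0 < 1 / a := by positivity
    have h1 : 1 + u ≤ (1 + 1 / a) * (1 + a * u) := by
      have hexp : (1 + 1/a) * (1 + a*u) = 1 + a*u + 1/a + u := by
        field_simp; ring
      rw [hexp]; linarith
    have h2 : (1 + u) ^ N ≤ ((1 + 1/a) * (1 + a*u)) ^ N :=
      pow_le_pow_left₀ (by linarith) h1 N
    have h3 : (1 + a*u) ≤ Real.exp (a*u) := by
      have := Real.add_one_le_exp (a*u); linarith
    calc (1+u)^N ≤ ((1 + 1/a) * (1 + a*u))^N := h2
      _ = (1+1/a)^N * (1+a*u)^N := mul_pow _ _ _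
      _ ≤ (1+1/a)^N * (Real.exp (a*u))^N := by
          apply mul_le_mul_of_nonneg_left (pow_le_pow_left₀ (by positivity) h3 N) (by positivity)
      _ = (1+1/a)^N * Real.exp (c * u) := by
          have hN' : (N:ℝ) ≠ 0 := by positivity
          rw [← Real.exp_nat_mul]; congr 1; rw [ha]; field_simp

lemma integrable_exp_neg_abs {b : ℝ} (hb : 0 < b) :
    Integrable (fun x : ℝ => Real.exp (-b * |x|)) := by
  have h1 : IntegrableOn (fun x : ℝ => Real.exp (-b * x)) (Set.Ioi 0) :=
    exp_neg_integrableOn_Ioi 0 hb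
  have h1' : Integrable ((Set.Ici (0:ℝ)).indicator (fun x : ℝ => Real.exp (-b * x))) := by
    rw [integrable_indicator_iff measurableSet_Ici]
    rw [integrableOn_Ici_iff_integrableOn_Ioi]; exact h1
  have h2' : Integrable ((Set.Iio (0:ℝ)).indicator (fun x : ℝ => Real.exp (b * x))) := by
    have h1'' : Integrable ((Set.Ioi (0:ℝ)).indicator (fun x : ℝ => Real.exp (-b * x))) := by
      rw [integrable_indicator_iff measurableSet_Ioi]; exact h1
    have := h1''.comp_neg
    apply this.congr
    filter_upwards with t
    by_cases ht : t < 0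
    · rw [Set.indicator_of_mem (by simpa using ht : -t ∈ Set.Ioi (0:ℝ)),
        Set.indicator_of_mem (by simpa using ht : t ∈ Set.Iio (0:ℝ))]
      ring_nf
    · rw [Set.indicator_of_notMem (by simpa using ht), Set.indicator_of_notMem (by simpa using ht)]
  have : Integrable ((Set.Ici (0:ℝ)).indicator (fun x : ℝ => Real.exp (-b * x)) +
      (Set.Iio (0:ℝ)).indicator (fun x : ℝ => Real.exp (b * x))) := h1'.add h2'
  apply this.congr
  filter_upwards with x
  by_cases hx : 0 ≤ x
  · simp only [Pi.add_apply, Set.indicator_of_mem (Set.mem_Ici.mpr hx),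
      Set.indicator_of_notMem (show x ∉ Set.Iio (0:ℝ) by simpa using hx)]
    rw [_root_.abs_of_nonneg hx]; ring_nf
  · push_neg at hx
    simp only [Pi.add_apply, Set.indicator_of_notMem (Set.notMem_Ici.mpr hx),
      Set.indicator_of_mem (Set.mem_Iio.mpr hx)]
    rw [_root_.abs_of_neg hx]; ring_nf

lemma abs_le_of_uIoc {x t : ℝ} (ht : t ∈ Set.uIoc 0 x) : |t| ≤ |x| := by
  rcases Set.mem_uIoc.mp ht with ⟨h1, h2⟩ | ⟨h1, h2⟩
  · rw [_root_.abs_of_pos h1]; exact le_trans h2 (le_abs_self x)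
  · rw [_root_.abs_of_nonpos h2]
    calc -t ≤ -x := by linarith
      _ ≤ |x| := neg_le_abs x

lemma growth_step {g : ℝ → ℝ} (hg : Differentiable ℝ g) (hg' : Continuous (deriv g))
    {C : ℝ} {N : ℕ} (hb : ∀ x, |deriv g x| ≤ C * (1+|x|)^N) :
    ∀ x, |g x| ≤ (|g 0| + C) * (1+|x|)^(N+1) := by
  have hC : 0 ≤ C := by
    have := hb 0
    have h0 : (0:ℝ) ≤ |deriv g 0| := abs_nonneg _
    simpa using le_trans h0 this
  intro x
  have hint : IntervalIntegrable (deriv g) volume 0 x :=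
    (hg'.intervalIntegrable 0 x)
  have hftc : ∫ y in (0:ℝ)..x, deriv g y = g x - g 0 :=
    intervalIntegral.integral_deriv_eq_sub (fun y _ => hg.differentiableAt) hint
  have hbd : ‖∫ y in (0:ℝ)..x, deriv g y‖ ≤ (C * (1+|x|)^N) * |x - 0| := by
    apply intervalIntegral.norm_integral_le_of_norm_le_const
    intro t ht
    rw [Real.norm_eq_abs]
    calc |deriv g t| ≤ C * (1+|t|)^N := hb t
      _ ≤ C * (1+|x|)^N := by
          apply mul_le_mul_of_nonneg_left _ hC
          exact pow_le_pow_left₀ (by positivity) (by linarith [abs_le_of_uIoc ht]) N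
  rw [hftc, Real.norm_eq_abs, sub_zero] at hbd
  have h1 : |g x| ≤ |g 0| + C * (1+|x|)^N * |x| := by
    have := abs_sub_abs_le_abs_sub (g x) (g 0)
    nlinarith [abs_nonneg (g x), abs_nonneg (g 0)]
  have hP : (1:ℝ) ≤ (1+|x|)^N := one_le_pow₀ (by linarith [abs_nonneg x])
  have hxa : (0:ℝ) ≤ |x| := abs_nonneg x
  have hg0 : (0:ℝ) ≤ |g 0| := abs_nonneg _
  calc |g x| ≤ |g 0| + C * (1+|x|)^N * |x| := h1
    _ ≤ (|g 0| + C) * (1+|x|)^(N+1) := by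
        rw [pow_succ]
        nlinarith [mul_nonneg (pow_nonneg (by linarith : (0:ℝ) ≤ 1+|x|) N) hxa]



lemma S_derivs_growth (k : ℕ) (S : ℝ → ℝ) (hS : ContDiff ℝ (k+1 : ℕ) S)
    (C₀ ν : ℝ) (hC₀ : 0 < C₀) (hν : 0 ≤ ν)
    (hgrowth : ∀ x : ℝ, |iteratedDeriv (k + 1) S x| ≤ C₀ * (1 + |x| ^ ν)) :
    ∃ C, 0 < C ∧ ∃ N : ℕ, ∀ j ≤ k+1, ∀ x : ℝ, |iteratedDeriv j S x| ≤ C * (1+|x|)^N := by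
  set Nv := Nat.ceil ν with hNv
  have hbase : ∀ x : ℝ, |iteratedDeriv (k+1) S x| ≤ (2*C₀) * (1+|x|)^Nv := by
    intro x
    have h1 : |x| ^ ν ≤ (1+|x|) ^ Nv := by
      calc |x| ^ ν ≤ (1+|x|) ^ ν :=
            Real.rpow_le_rpow (abs_nonneg x) (by linarith [abs_nonneg x]) hν
        _ ≤ (1+|x|) ^ (Nv:ℝ) :=
            Real.rpow_le_rpow_of_exponent_le (by linarith [abs_nonneg x]) (Nat.le_ceil ν)
        _ = (1+|x|) ^ Nv := Real.rpow_natCast _ _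
    have h2 : (1:ℝ) ≤ (1+|x|)^Nv := one_le_pow₀ (by linarith [abs_nonneg x])
    calc |iteratedDeriv (k+1) S x| ≤ C₀ * (1 + |x|^ν) := hgrowth x
      _ ≤ C₀ * ((1+|x|)^Nv + (1+|x|)^Nv) := by
          apply mul_le_mul_of_nonneg_left _ hC₀.le; linarith
      _ = (2*C₀) * (1+|x|)^Nv := by ring
  have main : ∀ d : ℕ, d ≤ k+1 →
      ∃ C, 0 < C ∧ ∃ N : ℕ, ∀ j, k+1-d ≤ j → j ≤ k+1 → ∀ x : ℝ,
        |iteratedDeriv j S x| ≤ C * (1+|x|)^N := by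
    intro d
    induction d with
    | zero =>
      intro _
      refine ⟨2*C₀, by positivity, Nv, fun j hj1 hj2 x => ?_⟩
      have : j = k+1 := le_antisymm hj2 (by simpa using hj1)
      rw [this]; exact hbase x
    | succ d ih =>
      intro hd
      obtain ⟨C, hC, N, hCN⟩ := ih (by omega)
      set m := k + 1 - (d+1) with hm
      have hm1 : m + 1 = k + 1 - d := by omega
      have hmlt : m < k + 1 := by omega
      -- bound for iteratedDeriv m S via growth_step
      have hdiff : Differentiable ℝ (iteratedDeriv m S) := by
        apply hS.differentiable_iteratedDeriv
        exact_mod_cast hmlt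
      have hderiv_eq : deriv (iteratedDeriv m S) = iteratedDeriv (m+1) S :=
        (iteratedDeriv_succ).symm
      have hcont : Continuous (deriv (iteratedDeriv m S)) := by
        rw [hderiv_eq]
        apply hS.continuous_iteratedDeriv
        exact_mod_cast (by omega : m + 1 ≤ k + 1)
      have hbnd : ∀ x : ℝ, |deriv (iteratedDeriv m S) x| ≤ C * (1+|x|)^N := by
        intro x; rw [hderiv_eq]
        exact hCN (m+1) (by omega) (by omega) x
      have hstep := growth_step hdiff hcont hbnd
      refine ⟨|iteratedDeriv m S 0| + C, by positivity, N+1, fun j hj1 hj2 x => ?_⟩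
      rcases eq_or_lt_of_le hj1 with hj | hj
      · rw [← hj]; exact hstep x
      · have h2 : (1:ℝ) ≤ 1+|x| := by linarith [abs_nonneg x]
        calc |iteratedDeriv j S x| ≤ C * (1+|x|)^N := hCN j (by omega) hj2 x
          _ ≤ (|iteratedDeriv m S 0| + C) * (1+|x|)^(N+1) := by
              apply mul_le_mul (by linarith [abs_nonneg (iteratedDeriv m S 0)])
                (pow_le_pow_right₀ h2 (by omega)) (by positivity) (by positivity)
  obtain ⟨C, hC, N, h⟩ := main (k+1) le_rfl
  exact ⟨C, hC, N, fun j hj x => h j (by omega) hj x⟩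

noncomputable def qseq (S : ℝ → ℝ) : ℕ → ℝ → ℝ
  | 0 => fun _ => 1
  | m+1 => fun x => deriv (qseq S m) x + 2 * S x * qseq S m x

lemma qseq_facts (k : ℕ) (S : ℝ → ℝ) (hS : ContDiff ℝ (k+1 : ℕ) S)
    {Cs : ℝ} {Ns : ℕ} (hCs : 0 < Cs)
    (hSg : ∀ j ≤ k+1, ∀ x : ℝ, |iteratedDeriv j S x| ≤ Cs * (1+|x|)^Ns) :
    ∀ m, m ≤ k+2 → ContDiff ℝ ((k+2-m : ℕ)) (qseq S m) ∧
      ∃ C, 0 < C ∧ ∃ N : ℕ, ∀ j ≤ k+2-m, ∀ x : ℝ,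
        |iteratedDeriv j (qseq S m) x| ≤ C * (1+|x|)^N := by
  intro m
  induction m with
  | zero =>
    intro _
    constructor
    · exact contDiff_const
    · refine ⟨1, one_pos, 0, fun j hj x => ?_⟩
      have h1 : (1:ℝ) ≤ 1 := le_rfl
      cases j with
      | zero => simp [qseq]
      | succ i =>
        have : iteratedDeriv (i+1) (qseq S 0) x = 0 := by
          rw [iteratedDeriv_succ']
          have : deriv (qseq S 0) = fun _ : ℝ => (0:ℝ) := by
            ext y; exact deriv_const y 1
          rw [this]
          simp [iteratedDeriv_eq_iteratedFDeriv]
        rw [this]; simp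
  | succ m ih =>
    intro hm
    obtain ⟨hq, C, hC, N, hbd⟩ := ih (by omega)
    have hn1 : 1 ≤ k + 2 - m := by omega
    have hsub : k + 2 - (m+1) = k + 1 - m := by omega
    -- ContDiff of deriv (qseq S m)
    have heq : ((k+1-m : ℕ) : WithTop ℕ∞) + 1 = ((k+2-m : ℕ) : WithTop ℕ∞) := by
      have : (k+1-m)+1 = k+2-m := by omega
      exact_mod_cast congrArg (fun a : ℕ => (a : WithTop ℕ∞)) this
    have hq2 : ContDiff ℝ (((k+1-m : ℕ) : WithTop ℕ∞) + 1) (qseq S m) := by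
      rw [heq]; exact hq
    have hqd : ContDiff ℝ ((k+1-m : ℕ)) (deriv (qseq S m)) :=
      (contDiff_succ_iff_deriv.mp hq2).2.2
    have hq' : ContDiff ℝ ((k+1-m : ℕ)) (qseq S m) := by
      apply hq.of_le; exact_mod_cast (by omega : k+1-m ≤ k+2-m)
    have hS' : ContDiff ℝ ((k+1-m : ℕ)) S := by
      apply hS.of_le; exact_mod_cast (by omega : k+1-m ≤ k+1)
    have hmul : ContDiff ℝ ((k+1-m : ℕ)) (fun x => 2 * S x * qseq S m x) :=
      ((contDiff_const.mul hS').mul hq')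
    have hcd : ContDiff ℝ ((k + 2 - (m+1) : ℕ)) (qseq S (m+1)) := by
      rw [hsub]
      exact hqd.add hmul
    refine ⟨hcd, C + 2^(k+2) * (2*Cs*C), by positivity, N + Ns, fun j hj x => ?_⟩
    rw [hsub] at hj
    have hone : (1:ℝ) ≤ 1 + |x| := by linarith [abs_nonneg x]
    -- split the sum
    have hfun : qseq S (m+1) = (deriv (qseq S m)) + (fun x => 2 * S x * qseq S m x) := by
      funext y; simp [qseq, Pi.add_apply]
    have hcast_j : ((j:ℕ) : WithTop ℕ∞) ≤ ((k+1-m : ℕ) : WithTop ℕ∞) := by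
      exact_mod_cast hj
    have hsplit : iteratedDeriv j (qseq S (m+1)) x =
        iteratedDeriv j (deriv (qseq S m)) x + iteratedDeriv j (fun x => 2 * S x * qseq S m x) x := by
      rw [hfun, iteratedDeriv_eq_iteratedFDeriv,
        iteratedFDeriv_add_apply (hqd.of_le hcast_j).contDiffAt (hmul.of_le hcast_j).contDiffAt]
      simp [iteratedDeriv_eq_iteratedFDeriv]
    -- first part
    have h1 : |iteratedDeriv j (deriv (qseq S m)) x| ≤ C * (1+|x|)^N := by
      rw [← iteratedDeriv_succ']
      exact hbd (j+1) (by omega) x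
    -- second part (Leibniz)
    have h2 : |iteratedDeriv j (fun x => 2 * S x * qseq S m x) x| ≤
        2^(k+2) * (2*Cs*C) * (1+|x|)^(N+Ns) := by
      have hmle := norm_iteratedFDeriv_mul_le (𝕜 := ℝ)
        (f := fun x => 2 * S x) (g := qseq S m) (N := ((k+1-m : ℕ) : WithTop ℕ∞))
        (contDiff_const.mul hS') hq' x hcast_j
      have hterm : ∀ i ∈ range (j+1),
          (j.choose i : ℝ) * ‖iteratedFDeriv ℝ i (fun x => 2 * S x) x‖ *
            ‖iteratedFDeriv ℝ (j-i) (qseq S m) x‖ ≤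
          (j.choose i : ℝ) * (2*Cs*C * (1+|x|)^(N+Ns)) := by
        intro i hi
        have hij : i ≤ j := by simpa using Nat.lt_succ_iff.mp (mem_range.mp hi)
        have hf_i : ‖iteratedFDeriv ℝ i (fun x => 2 * S x) x‖ ≤ 2 * (Cs * (1+|x|)^Ns) := by
          have hsm : (fun x => 2 * S x) = (2:ℝ) • S := by funext y; simp [smul_eq_mul]
          rw [hsm, iteratedFDeriv_const_smul_apply
            (ContDiff.contDiffAt (x := x) (hS.of_le (show ((i:ℕ) : WithTop ℕ∞) ≤ ((k+1 : ℕ) : WithTop ℕ∞) by exact_mod_cast (by omega : i ≤ k+1)))),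
            norm_smul (2:ℝ) (iteratedFDeriv ℝ i S x)]
          rw [norm_iteratedFDeriv_eq_norm_iteratedDeriv]
          simp only [Real.norm_eq_abs, Real.norm_ofNat, abs_two]
          have hg := hSg i (by omega) x
          have h2' : |(2:ℝ)| = 2 := abs_two
          nlinarith [abs_nonneg (iteratedDeriv i S x)]
        have hg_i : ‖iteratedFDeriv ℝ (j-i) (qseq S m) x‖ ≤ C * (1+|x|)^N := by
          rw [norm_iteratedFDeriv_eq_norm_iteratedDeriv, Real.norm_eq_abs]
          exact hbd (j-i) (by omega) x
        have hnn1 : (0:ℝ) ≤ (j.choose i : ℝ) := by positivity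
        have hnn2 : (0:ℝ) ≤ ‖iteratedFDeriv ℝ i (fun x => 2 * S x) x‖ := norm_nonneg _
        have hnn3 : (0:ℝ) ≤ ‖iteratedFDeriv ℝ (j-i) (qseq S m) x‖ := norm_nonneg _
        have hp1 : (0:ℝ) ≤ (1+|x|)^Ns := by positivity
        have hp2 : (0:ℝ) ≤ (1+|x|)^N := by positivity
        have key : ‖iteratedFDeriv ℝ i (fun x => 2 * S x) x‖ *
            ‖iteratedFDeriv ℝ (j-i) (qseq S m) x‖ ≤ 2*Cs*C * (1+|x|)^(N+Ns) := by
          calc ‖iteratedFDeriv ℝ i (fun x => 2 * S x) x‖ * ‖iteratedFDeriv ℝ (j-i) (qseq S m) x‖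
              ≤ (2 * (Cs * (1+|x|)^Ns)) * (C * (1+|x|)^N) := by
                apply mul_le_mul hf_i hg_i hnn3 (by positivity)
            _ = 2*Cs*C * (1+|x|)^(N+Ns) := by rw [pow_add]; ring
        calc (j.choose i : ℝ) * ‖iteratedFDeriv ℝ i (fun x => 2 * S x) x‖ *
              ‖iteratedFDeriv ℝ (j-i) (qseq S m) x‖
            = (j.choose i : ℝ) * (‖iteratedFDeriv ℝ i (fun x => 2 * S x) x‖ *
              ‖iteratedFDeriv ℝ (j-i) (qseq S m) x‖) := by ring
          _ ≤ (j.choose i : ℝ) * (2*Cs*C * (1+|x|)^(N+Ns)) :=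
              mul_le_mul_of_nonneg_left key hnn1
      calc |iteratedDeriv j (fun x => 2 * S x * qseq S m x) x|
          = ‖iteratedFDeriv ℝ j (fun y => (fun x => 2 * S x) y * qseq S m y) x‖ := by
            rw [norm_iteratedFDeriv_eq_norm_iteratedDeriv, Real.norm_eq_abs]
        _ ≤ ∑ i ∈ range (j+1), (j.choose i : ℝ) * ‖iteratedFDeriv ℝ i (fun x => 2 * S x) x‖ *
              ‖iteratedFDeriv ℝ (j-i) (qseq S m) x‖ := hmle
        _ ≤ ∑ i ∈ range (j+1), (j.choose i : ℝ) * (2*Cs*C * (1+|x|)^(N+Ns)) :=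
            Finset.sum_le_sum hterm
        _ = (∑ i ∈ range (j+1), (j.choose i : ℝ)) * (2*Cs*C * (1+|x|)^(N+Ns)) := by
            rw [← Finset.sum_mul]
        _ = (2^j : ℝ) * (2*Cs*C * (1+|x|)^(N+Ns)) := by
            norm_cast
            rw [Nat.sum_range_choose]
        _ ≤ 2^(k+2) * (2*Cs*C) * (1+|x|)^(N+Ns) := by
            have h2j : (2:ℝ)^j ≤ 2^(k+2) := pow_le_pow_right₀ one_le_two (by omega)
            have : (0:ℝ) ≤ 2*Cs*C * (1+|x|)^(N+Ns) := by positivity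
            nlinarith [this, h2j]
    -- combine
    have hNle : (1+|x|)^N ≤ (1+|x|)^(N+Ns) := pow_le_pow_right₀ hone (by omega)
    calc |iteratedDeriv j (qseq S (m+1)) x|
        ≤ |iteratedDeriv j (deriv (qseq S m)) x| +
          |iteratedDeriv j (fun x => 2 * S x * qseq S m x) x| := by
          rw [hsplit]; exact abs_add_le _ _
      _ ≤ C * (1+|x|)^(N+Ns) + 2^(k+2) * (2*Cs*C) * (1+|x|)^(N+Ns) := by
          apply add_le_add _ h2
          calc |iteratedDeriv j (deriv (qseq S m)) x| ≤ C * (1+|x|)^N := h1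
            _ ≤ C * (1+|x|)^(N+Ns) := mul_le_mul_of_nonneg_left hNle hC.le
      _ = (C + 2^(k+2) * (2*Cs*C)) * (1+|x|)^(N+Ns) := by ring



section Gfacts

noncomputable def Ffun (S : ℝ → ℝ) : ℝ → ℝ := fun x => ∫ t in (0:ℝ)..x, S t
noncomputable def Gfun (S : ℝ → ℝ) : ℝ → ℝ := fun x => Real.exp (2 * Ffun S x)
noncomputable def GfunC (S : ℝ → ℝ) : ℝ → ℂ := fun x => ((Gfun S x : ℝ) : ℂ)

lemma hF_deriv (S : ℝ → ℝ) (hSc : Continuous S) : ∀ x, HasDerivAt (Ffun S) (S x) x := by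
  intro x
  exact intervalIntegral.integral_hasDerivAt_right
    (hSc.intervalIntegrable 0 x)
    (hSc.stronglyMeasurableAtFilter volume (nhds x))
    (hSc.continuousAt)

lemma hF_contDiff (k : ℕ) (S : ℝ → ℝ) (hS : ContDiff ℝ (k+1 : ℕ) S) : ContDiff ℝ ((k+2 : ℕ)) (Ffun S) := by
  have hSc := hS.continuous
  have heq : (((k+1 : ℕ)) : WithTop ℕ∞) + 1 = ((k+2 : ℕ) : WithTop ℕ∞) := by
    exact_mod_cast congrArg (fun a : ℕ => (a : WithTop ℕ∞)) (by omega : (k+1)+1 = k+2)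
  rw [← heq]
  rw [contDiff_succ_iff_deriv]
  refine ⟨fun x => (hF_deriv S hSc x).differentiableAt, by simp, ?_⟩
  have : deriv (Ffun S) = S := funext fun x => (hF_deriv S hSc x).deriv
  rw [this]; exact hS

lemma hG_contDiff (k : ℕ) (S : ℝ → ℝ) (hS : ContDiff ℝ (k+1 : ℕ) S) : ContDiff ℝ ((k+2 : ℕ)) (Gfun S) :=
  Real.contDiff_exp.comp (contDiff_const.mul (hF_contDiff k S hS))

lemma hG_pos (S : ℝ → ℝ) : ∀ x, 0 < Gfun S x := fun x => Real.exp_pos _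

lemma hG_deriv (S : ℝ → ℝ) (hSc : Continuous S) :
    ∀ x, HasDerivAt (Gfun S) (Real.exp (2 * Ffun S x) * (2 * S x)) x := by
  intro x
  exact ((hF_deriv S hSc x).const_mul 2).exp

lemma hGC_iteratedDeriv (k : ℕ) (S : ℝ → ℝ) (hSc : Continuous S)
    (hq : ∀ m, m ≤ k+2 → ContDiff ℝ ((k+2-m : ℕ)) (qseq S m)) :
    ∀ m, m ≤ k + 2 →
      iteratedDeriv m (GfunC S) = fun x => ((qseq S m x * Gfun S x : ℝ) : ℂ) := by
  intro m
  induction m with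
  | zero => intro _; funext x; simp [iteratedDeriv_zero, GfunC, qseq]
  | succ m ih =>
    intro hm
    have ihe := ih (by omega)
    rw [iteratedDeriv_succ, ihe]
    funext x
    have hqd : DifferentiableAt ℝ (qseq S m) x := by
      have h1 : 1 ≤ k+2-m := by omega
      have := (hq m (by omega)).differentiable (by exact_mod_cast (by omega : k+2-m ≠ 0))
      exact this.differentiableAt
    have hu : HasDerivAt (fun y => qseq S m y * Gfun S y)
        (deriv (qseq S m) x * Gfun S x + qseq S m x * (Real.exp (2 * Ffun S x) * (2 * S x))) x :=
      (hqd.hasDerivAt).mul (hG_deriv S hSc x)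
    have huC := hu.ofReal_comp
    rw [huC.deriv]
    apply Complex.ofReal_inj.mpr
    simp only [qseq]
    have hGe : Gfun S x = Real.exp (2 * Ffun S x) := rfl
    rw [hGe]
    ring

lemma hG_tail (k : ℕ) (S : ℝ → ℝ) (hS : ContDiff ℝ (k+1 : ℕ) S) (A c : ℝ) (hA : 0 ≤ A) (hc : 0 < c) (hSc : Continuous S)
    (h1 : ∀ x ≥ A, S x ≤ -c) (h2 : ∀ x ≤ -A, c ≤ S x) :
    ∃ K > 0, ∀ x, Gfun S x ≤ K * Real.exp (-(2*c) * |x|) := by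
  obtain ⟨x₀, hx₀, hmax⟩ := (isCompact_Icc (a := -A) (b := A)).exists_isMaxOn
    ⟨0, by constructor <;> linarith⟩ (hG_contDiff k S hS).continuous.continuousOn
  set M := Gfun S x₀ with hM
  set K := Real.exp (2 * Ffun S A + 2*c*A) + Real.exp (2 * Ffun S (-A) + 2*c*A)
    + M * Real.exp (2*c*A) with hK
  have hMpos : 0 < M := hG_pos S x₀
  have hKpos : 0 < K := by positivity
  refine ⟨K, hKpos, fun x => ?_⟩
  have hterm1 : (0:ℝ) < Real.exp (2 * Ffun S A + 2*c*A) := Real.exp_pos _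
  have hterm2 : (0:ℝ) < Real.exp (2 * Ffun S (-A) + 2*c*A) := Real.exp_pos _
  have hterm3 : (0:ℝ) < M * Real.exp (2*c*A) := by positivity
  rcases le_or_gt x (-A) with hx | hx
  · -- left tail
    have habs : |x| = -x := abs_of_nonpos (by linarith)
    have hFx : Ffun S x ≤ Ffun S (-A) + c*A + c*x := by
      have hsplit : Ffun S (-A) = Ffun S x + ∫ t in x..(-A), S t := by
        rw [Ffun, Ffun]
        rw [← intervalIntegral.integral_add_adjacent_intervals
          (hSc.intervalIntegrable 0 x) (hSc.intervalIntegrable x (-A))]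
      have hlow : c * ((-A) - x) ≤ ∫ t in x..(-A), S t := by
        have := intervalIntegral.integral_mono_on (by linarith : x ≤ -A)
          (_root_.intervalIntegrable_const (μ := volume) (c := c)) (hSc.intervalIntegrable x (-A))
          (fun t ht => h2 t ht.2)
        rw [mul_comm]
        simpa using this
      have : Ffun S x = Ffun S (-A) - ∫ t in x..(-A), S t := by linarith [hsplit]
      rw [this]; nlinarith
    calc Gfun S x = Real.exp (2 * Ffun S x) := rfl
      _ ≤ Real.exp (2 * (Ffun S (-A) + c*A + c*x)) := Real.exp_le_exp.mpr (by linarith)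
      _ = Real.exp (2 * Ffun S (-A) + 2*c*A) * Real.exp (-(2*c) * |x|) := by
          rw [← Real.exp_add]; congr 1; rw [habs]; ring
      _ ≤ K * Real.exp (-(2*c) * |x|) := by
          apply mul_le_mul_of_nonneg_right _ (Real.exp_pos _).le
          rw [hK]; linarith
  · rcases le_or_gt A x with hx2 | hx2
    · -- right tail
      have habs : |x| = x := abs_of_nonneg (by linarith)
      have hFx : Ffun S x ≤ Ffun S A + c*A - c*x := by
        have hsplit : Ffun S x = Ffun S A + ∫ t in A..x, S t := by
          rw [Ffun, Ffun]
          rw [← intervalIntegral.integral_add_adjacent_intervals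
            (hSc.intervalIntegrable 0 A) (hSc.intervalIntegrable A x)]
        have hup : (∫ t in A..x, S t) ≤ -c * (x - A) := by
          have := intervalIntegral.integral_mono_on hx2
            (hSc.intervalIntegrable A x) (_root_.intervalIntegrable_const (μ := volume) (c := -c))
            (fun t ht => h1 t ht.1)
          rw [show -c * (x - A) = -((x-A)*c) by ring]
          simpa using this
        rw [hsplit]; nlinarith
      calc Gfun S x = Real.exp (2 * Ffun S x) := rfl
        _ ≤ Real.exp (2 * (Ffun S A + c*A - c*x)) := Real.exp_le_exp.mpr (by linarith)
        _ = Real.exp (2 * Ffun S A + 2*c*A) * Real.exp (-(2*c) * |x|) := by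
            rw [← Real.exp_add]; congr 1; rw [habs]; ring
        _ ≤ K * Real.exp (-(2*c) * |x|) := by
            apply mul_le_mul_of_nonneg_right _ (Real.exp_pos _).le
            rw [hK]; linarith
    · -- middle
      have hxm : x ∈ Set.Icc (-A) A := ⟨by linarith, by linarith⟩
      have hGle : Gfun S x ≤ M := hmax hxm
      have habs : |x| ≤ A := abs_le.mpr ⟨by linarith, by linarith⟩
      have hexp : Real.exp (-(2*c)*A) ≤ Real.exp (-(2*c) * |x|) :=
        Real.exp_le_exp.mpr (by nlinarith)
      calc Gfun S x ≤ M := hGle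
        _ = (M * Real.exp (2*c*A)) * Real.exp (-(2*c)*A) := by
            rw [mul_assoc, ← Real.exp_add]; simp
        _ ≤ (M * Real.exp (2*c*A)) * Real.exp (-(2*c)*|x|) :=
            mul_le_mul_of_nonneg_left hexp hterm3.le
        _ ≤ K * Real.exp (-(2*c) * |x|) := by
            apply mul_le_mul_of_nonneg_right _ (Real.exp_pos _).le
            rw [hK]; linarith

end Gfacts

-- Key Gaussian-regularized bound
lemma planch_bound (h : ℝ → ℂ) (hc : Continuous h) (hi : Integrable h)
    (M : ℝ) (hM : ∀ x, ‖h x‖ ≤ M) {b : ℝ} (hb : 0 < b) :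
    ∫ ξ : ℝ, ‖𝓕 h ξ‖^2 * Real.exp (-π * b * ξ^2) ≤ M * ∫ x : ℝ, ‖h x‖ := by
  set K : ℝ → ℝ → ℂ := fun x ξ => Complex.exp (↑(-2 * π * (x * ξ)) * Complex.I) with hKdef
  have hFh : ∀ ξ : ℝ, 𝓕 h ξ = ∫ x : ℝ, K x ξ * h x := by
    intro ξ
    rw [Real.fourier_eq']
    simp [hKdef, RCLike.inner_apply, smul_eq_mul]
    simp_rw [mul_comm (ξ:ℂ)]
  set gb : ℝ → ℂ := fun ξ => Complex.exp (-↑π * ↑b * (↑ξ:ℂ)^2) with hgbdef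
  have hgb_real : ∀ ξ : ℝ, gb ξ = ((Real.exp (-π * b * ξ^2) : ℝ) : ℂ) := by
    intro ξ; rw [hgbdef]; push_cast; ring_nf
  set cb : ℂ := 1 / (b:ℂ) ^ (1/2 : ℂ) with hcb
  set Gg : ℝ → ℂ := fun t => cb * Complex.exp (-↑π / ↑b * (↑t:ℂ)^2) with hGg
  have hGgnorm : ∀ t : ℝ, ‖Gg t‖ = ‖cb‖ * Real.exp (-(π/b) * t^2) := by
    intro t
    rw [hGg]
    simp only [norm_mul, Complex.norm_exp]
    congr 2
    have : (-↑π / ↑b * (↑t:ℂ)^2) = (((-π/b) * t^2 : ℝ) : ℂ) := by push_cast; ring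
    rw [this, Complex.ofReal_re]; ring
  have hcbnorm : ‖cb‖ = 1 / Real.sqrt b := by
    rw [hcb]
    simp only [norm_div, norm_one]
    rw [Complex.norm_cpow_eq_rpow_re_of_pos hb]
    simp [Real.sqrt_eq_rpow]
  -- the Fourier transform of the Gaussian
  have hgauss : (𝓕 gb) = Gg := by
    rw [hgbdef, hGg, hcb]
    rw [fourier_gaussian_pi (by simpa using hb)]
  -- norm of Gg integral over translates equals 1
  have hGg_int : Integrable (fun t : ℝ => ‖Gg t‖) := by
    have : Integrable (fun t : ℝ => Real.exp (-(π/b) * t^2)) :=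
      integrable_exp_neg_mul_sq (by positivity)
    apply (this.const_mul ‖cb‖).congr
    filter_upwards with t
    rw [hGgnorm t]
  have hGg_transl : ∀ x : ℝ, ∫ y : ℝ, ‖Gg (x - y)‖ = 1 := by
    intro x
    have h1 : ∫ y : ℝ, ‖Gg (x - y)‖ = ∫ y : ℝ, ‖Gg y‖ :=
      integral_sub_left_eq_self (fun y => ‖Gg y‖) volume x
    rw [h1]
    have h2 : ∫ y : ℝ, ‖Gg y‖ = ‖cb‖ * ∫ y : ℝ, Real.exp (-(π/b) * y^2) := by
      rw [← MeasureTheory.integral_const_mul]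
      congr 1; funext y; rw [hGgnorm y]
    rw [h2, integral_gaussian, hcbnorm]
    have hπb : π / (π / b) = b := by
      field_simp
    rw [hπb]
    rw [one_div, inv_mul_cancel₀ (by positivity : Real.sqrt b ≠ 0)]
  -- the regularized integral as a complex integral
  set Φ : ℝ → ℝ × ℝ → ℂ := fun ξ p => gb ξ * ((K p.1 ξ * h p.1) * (starRingEnd ℂ) (K p.2 ξ * h p.2))
    with hΦ
  have hnormΦ : ∀ ξ (p : ℝ × ℝ), ‖Φ ξ p‖ = Real.exp (-(π*b) * ξ^2) * (‖h p.1‖ * ‖h p.2‖) := by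
    intro ξ p
    rw [hΦ]
    simp only [norm_mul, RCLike.norm_conj]
    have h1 : ‖gb ξ‖ = Real.exp (-(π*b) * ξ^2) := by
      rw [hgb_real]
      rw [Complex.norm_real, Real.norm_eq_abs, abs_of_pos (Real.exp_pos _)]
      ring_nf
    have h2 : ∀ x, ‖K x ξ‖ = 1 := by
      intro x; rw [hKdef]; exact Complex.norm_exp_ofReal_mul_I _
    rw [h1, h2, h2]
    ring
  have hΦint : Integrable (Function.uncurry Φ) (volume.prod (volume.prod volume)) := by
    have hdom : Integrable (fun q : ℝ × (ℝ × ℝ) =>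
        Real.exp (-(π*b) * q.1^2) * (‖h q.2.1‖ * ‖h q.2.2‖)) (volume.prod (volume.prod volume)) :=
      (integrable_exp_neg_mul_sq (by positivity : 0 < π*b)).mul_prod (hi.norm.mul_prod hi.norm)
    apply hdom.mono'
    · apply Continuous.aestronglyMeasurable
      rw [hΦ, hKdef]
      have c1 : Continuous (fun q : ℝ × (ℝ × ℝ) =>
          Complex.exp (↑(-2 * π * (q.2.2 * q.1)) * Complex.I) * h q.2.2) := by fun_prop
      have c2 : Continuous (fun q : ℝ × (ℝ × ℝ) => (starRingEnd ℂ)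
          (Complex.exp (↑(-2 * π * (q.2.2 * q.1)) * Complex.I) * h q.2.2)) :=
        continuous_star.comp c1
      have c3 : Continuous (fun q : ℝ × (ℝ × ℝ) =>
          Complex.exp (↑(-2 * π * (q.2.1 * q.1)) * Complex.I) * h q.2.1) := by fun_prop
      have c0 : Continuous (fun q : ℝ × (ℝ × ℝ) => gb q.1) := by
        rw [hgbdef]; fun_prop
      exact c0.mul (c3.mul c2)
    · filter_upwards with q
      rw [Function.uncurry, hnormΦ q.1 q.2]
  -- inner ξ-integral
  have hinner : ∀ p : ℝ × ℝ, ∫ ξ : ℝ, Φ ξ p = (h p.1 * (starRingEnd ℂ) (h p.2)) * Gg (p.1 - p.2) := by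
    intro p
    have hptwise : ∀ ξ : ℝ, Φ ξ p =
        (h p.1 * (starRingEnd ℂ) (h p.2)) * (K (p.1 - p.2) ξ * gb ξ) := by
      intro ξ
      rw [hΦ, hKdef]
      simp only [map_mul]
      have hconjK : (starRingEnd ℂ) (Complex.exp (↑(-2 * π * (p.2 * ξ)) * Complex.I)) =
          Complex.exp (↑(2 * π * (p.2 * ξ)) * Complex.I) := by
        rw [← Complex.exp_conj, map_mul, Complex.conj_ofReal, Complex.conj_I]
        congr 1
        push_cast
        ring
      rw [hconjK]
      rw [show Complex.exp (↑(-2 * π * ((p.1 - p.2) * ξ)) * Complex.I) =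
          Complex.exp (↑(-2 * π * (p.1 * ξ)) * Complex.I) *
            Complex.exp (↑(2 * π * (p.2 * ξ)) * Complex.I) by
        rw [← Complex.exp_add]; congr 1; push_cast; ring]
      ring
    calc ∫ ξ : ℝ, Φ ξ p
        = ∫ ξ : ℝ, (h p.1 * (starRingEnd ℂ) (h p.2)) * (K (p.1 - p.2) ξ * gb ξ) := by
          congr 1; funext ξ; exact hptwise ξ
      _ = (h p.1 * (starRingEnd ℂ) (h p.2)) * ∫ ξ : ℝ, K (p.1 - p.2) ξ * gb ξ :=
          MeasureTheory.integral_const_mul _ _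
      _ = (h p.1 * (starRingEnd ℂ) (h p.2)) * 𝓕 gb (p.1 - p.2) := by
          congr 1
          rw [Real.fourier_eq']
          simp only [hKdef, RCLike.inner_apply, smul_eq_mul, map_mul, conj_trivial]
      _ = (h p.1 * (starRingEnd ℂ) (h p.2)) * Gg (p.1 - p.2) := by rw [hgauss]
  -- the double integral form
  have hdouble : ∫ ξ : ℝ, gb ξ * (𝓕 h ξ * (starRingEnd ℂ) (𝓕 h ξ)) =
      ∫ p : ℝ × ℝ, (h p.1 * (starRingEnd ℂ) (h p.2)) * Gg (p.1 - p.2)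
        ∂(volume.prod volume) := by
    have step1 : ∀ ξ : ℝ, gb ξ * (𝓕 h ξ * (starRingEnd ℂ) (𝓕 h ξ)) = ∫ p : ℝ × ℝ, Φ ξ p
        ∂(volume.prod volume) := by
      intro ξ
      rw [hFh]
      rw [← integral_conj]
      rw [← MeasureTheory.integral_prod_mul (μ := volume) (ν := volume)
        (f := fun x => K x ξ * h x) (g := fun y => (starRingEnd ℂ) (K y ξ * h y))]
      rw [← MeasureTheory.integral_const_mul]
    calc ∫ ξ : ℝ, gb ξ * (𝓕 h ξ * (starRingEnd ℂ) (𝓕 h ξ))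
        = ∫ ξ : ℝ, ∫ p : ℝ × ℝ, Φ ξ p ∂(volume.prod volume) := by
          congr 1; funext ξ; exact step1 ξ
      _ = ∫ p : ℝ × ℝ, (∫ ξ : ℝ, Φ ξ p) ∂(volume.prod volume) :=
          integral_integral_swap hΦint
      _ = ∫ p : ℝ × ℝ, (h p.1 * (starRingEnd ℂ) (h p.2)) * Gg (p.1 - p.2)
            ∂(volume.prod volume) := by
          congr 1; funext p; exact hinner p
  -- bound the double integral
  have hM0 : 0 ≤ M := le_trans (norm_nonneg _) (hM 0)
  have hprod_int : Integrable (fun p : ℝ × ℝ => (h p.1 * (starRingEnd ℂ) (h p.2)) * Gg (p.1 - p.2))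
      (volume.prod volume) := by
    have hdom : Integrable (fun p : ℝ × ℝ => ‖cb‖ * (‖h p.1‖ * ‖h p.2‖)) (volume.prod volume) :=
      (hi.norm.mul_prod hi.norm).const_mul ‖cb‖
    apply hdom.mono'
    · apply Continuous.aestronglyMeasurable
      apply Continuous.mul
      · exact (hc.comp continuous_fst).mul (continuous_star.comp (hc.comp continuous_snd))
      · apply continuous_const.mul
        apply Complex.continuous_exp.comp
        fun_prop
    · filter_upwards with p
      rw [norm_mul, norm_mul, RCLike.norm_conj, hGgnorm]
      have hle1 : Real.exp (-(π/b) * (p.1-p.2)^2) ≤ 1 := by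
        rw [← Real.exp_zero]
        apply Real.exp_le_exp.mpr
        have : 0 ≤ (π/b) * (p.1-p.2)^2 := by positivity
        linarith
      have : ‖cb‖ * Real.exp (-(π/b) * (p.1-p.2)^2) ≤ ‖cb‖ * 1 :=
        mul_le_mul_of_nonneg_left hle1 (norm_nonneg _)
      nlinarith [norm_nonneg (h p.1), norm_nonneg (h p.2), norm_nonneg cb,
        mul_nonneg (norm_nonneg (h p.1)) (norm_nonneg (h p.2))]
  have hIc_bound : ‖∫ ξ : ℝ, gb ξ * (𝓕 h ξ * (starRingEnd ℂ) (𝓕 h ξ))‖ ≤ M * ∫ x : ℝ, ‖h x‖ := by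
    rw [hdouble, MeasureTheory.integral_prod _ hprod_int]
    have hinner_bd : ∀ x : ℝ, ‖∫ y : ℝ, (h x * (starRingEnd ℂ) (h y)) * Gg (x - y)‖ ≤ M * ‖h x‖ := by
      intro x
      have hgint : Integrable (fun y : ℝ => (M * ‖h x‖) * ‖Gg (x - y)‖) := by
        apply Integrable.const_mul
        exact (integrable_comp_sub_left (fun t => ‖Gg t‖) x).mpr hGg_int
      calc ‖∫ y : ℝ, (h x * (starRingEnd ℂ) (h y)) * Gg (x - y)‖
          ≤ ∫ y : ℝ, (M * ‖h x‖) * ‖Gg (x - y)‖ := by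
            apply MeasureTheory.norm_integral_le_of_norm_le hgint
            filter_upwards with y
            rw [norm_mul, norm_mul, RCLike.norm_conj]
            have := hM y
            nlinarith [norm_nonneg (h x), norm_nonneg (Gg (x-y)), norm_nonneg (h y),
              mul_nonneg (norm_nonneg (h x)) (norm_nonneg (Gg (x-y)))]
        _ = (M * ‖h x‖) * ∫ y : ℝ, ‖Gg (x - y)‖ := MeasureTheory.integral_const_mul _ _
        _ = M * ‖h x‖ := by rw [hGg_transl x, mul_one]
    calc ‖∫ x : ℝ, ∫ y : ℝ, (h x * (starRingEnd ℂ) (h y)) * Gg (x - y)‖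
        ≤ ∫ x : ℝ, M * ‖h x‖ := by
          apply MeasureTheory.norm_integral_le_of_norm_le (hi.norm.const_mul M)
          filter_upwards with x
          exact hinner_bd x
      _ = M * ∫ x : ℝ, ‖h x‖ := MeasureTheory.integral_const_mul _ _
  -- identification with the real integral
  have hreal : ((∫ ξ : ℝ, ‖𝓕 h ξ‖^2 * Real.exp (-π * b * ξ^2) : ℝ) : ℂ) =
      ∫ ξ : ℝ, gb ξ * (𝓕 h ξ * (starRingEnd ℂ) (𝓕 h ξ)) := by
    have hptw : ∀ ξ : ℝ, gb ξ * (𝓕 h ξ * (starRingEnd ℂ) (𝓕 h ξ)) =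
        ((‖𝓕 h ξ‖^2 * Real.exp (-π * b * ξ^2) : ℝ) : ℂ) := by
      intro ξ
      rw [Complex.mul_conj, hgb_real ξ, ← Complex.ofReal_mul]
      congr 1
      rw [Complex.normSq_eq_norm_sq]
      ring
    calc ((∫ ξ : ℝ, ‖𝓕 h ξ‖^2 * Real.exp (-π * b * ξ^2) : ℝ) : ℂ)
        = ∫ ξ : ℝ, ((‖𝓕 h ξ‖^2 * Real.exp (-π * b * ξ^2) : ℝ) : ℂ) := integral_ofReal.symm
      _ = ∫ ξ : ℝ, gb ξ * (𝓕 h ξ * (starRingEnd ℂ) (𝓕 h ξ)) := by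
          congr 1; funext ξ; exact (hptw ξ).symm
  have hnonneg : 0 ≤ ∫ ξ : ℝ, ‖𝓕 h ξ‖^2 * Real.exp (-π * b * ξ^2) := by
    apply MeasureTheory.integral_nonneg
    intro ξ; positivity
  calc ∫ ξ : ℝ, ‖𝓕 h ξ‖^2 * Real.exp (-π * b * ξ^2)
      = ‖((∫ ξ : ℝ, ‖𝓕 h ξ‖^2 * Real.exp (-π * b * ξ^2) : ℝ) : ℂ)‖ := by
        rw [Complex.norm_real, Real.norm_eq_abs, _root_.abs_of_nonneg hnonneg]
    _ = ‖∫ ξ : ℝ, gb ξ * (𝓕 h ξ * (starRingEnd ℂ) (𝓕 h ξ))‖ := by rw [hreal]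
    _ ≤ M * ∫ x : ℝ, ‖h x‖ := hIc_bound

lemma planch (h : ℝ → ℂ) (hc : Continuous h) (hi : Integrable h)
    (M : ℝ) (hM : ∀ x, ‖h x‖ ≤ M) :
    Integrable (fun ξ : ℝ => ‖𝓕 h ξ‖^2) := by
  have hFc : Continuous (𝓕 h) :=
    VectorFourier.fourierIntegral_continuous Real.continuous_fourierChar
      (by exact continuous_inner) hi
  set L : ℝ := ∫ x : ℝ, ‖h x‖ with hL
  have hFb : ∀ ξ : ℝ, ‖𝓕 h ξ‖ ≤ L := fun ξ =>
    VectorFourier.norm_fourierIntegral_le_integral_norm _ _ _ _ _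
  set εf : ℕ → ℝ := fun n => 1/(n+1) with hεf
  have hεpos : ∀ n : ℕ, 0 < εf n := fun n => by positivity
  have hεanti : ∀ m n : ℕ, m ≤ n → εf n ≤ εf m := by
    intro m n hmn
    apply div_le_div_of_nonneg_left one_pos.le (by positivity)
    push_cast; linarith [(Nat.cast_le (α := ℝ)).mpr hmn]
  have hint : ∀ n : ℕ, Integrable (fun ξ : ℝ => ‖𝓕 h ξ‖^2 * Real.exp (-π * εf n * ξ^2)) := by
    intro n
    have hdom : Integrable (fun ξ : ℝ => L^2 * Real.exp (-(π * εf n) * ξ^2)) :=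
      (integrable_exp_neg_mul_sq (by positivity)).const_mul _
    apply hdom.mono'
    · exact ((hFc.norm.pow 2).mul (by fun_prop)).aestronglyMeasurable
    · filter_upwards with ξ
      rw [Real.norm_eq_abs, _root_.abs_of_nonneg (by positivity)]
      have h1 : ‖𝓕 h ξ‖^2 ≤ L^2 := by
        have := hFb ξ
        nlinarith [norm_nonneg (𝓕 h ξ)]
      have h2 : (0:ℝ) < Real.exp (-π * εf n * ξ^2) := Real.exp_pos _
      have h3 : -(π * εf n) * ξ^2 = -π * εf n * ξ^2 := by ring
      rw [h3]
      nlinarith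
  have hbd : ∀ n : ℕ, (∫⁻ ξ : ℝ, ENNReal.ofReal (‖𝓕 h ξ‖^2 * Real.exp (-π * εf n * ξ^2)))
      ≤ ENNReal.ofReal (M * L) := by
    intro n
    rw [← ofReal_integral_eq_lintegral_ofReal (hint n)
      (Filter.Eventually.of_forall fun ξ => by positivity)]
    exact ENNReal.ofReal_le_ofReal (planch_bound h hc hi M hM (hεpos n))
  constructor
  · exact (hFc.norm.pow 2).aestronglyMeasurable
  · rw [hasFiniteIntegral_iff_norm]
    have hsup : ∀ ξ : ℝ, ENNReal.ofReal ‖(‖𝓕 h ξ‖^2)‖ =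
        ⨆ n : ℕ, ENNReal.ofReal (‖𝓕 h ξ‖^2 * Real.exp (-π * εf n * ξ^2)) := by
      intro ξ
      have hmono : Monotone (fun n : ℕ =>
          ENNReal.ofReal (‖𝓕 h ξ‖^2 * Real.exp (-π * εf n * ξ^2))) := by
        intro m n hmn
        apply ENNReal.ofReal_le_ofReal
        apply mul_le_mul_of_nonneg_left _ (by positivity)
        apply Real.exp_le_exp.mpr
        have hkey := mul_le_mul_of_nonneg_right
          (mul_le_mul_of_nonneg_left (hεanti m n hmn) Real.pi_pos.le) (sq_nonneg ξ)
        linarith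
      have htend : Filter.Tendsto (fun n : ℕ =>
          ENNReal.ofReal (‖𝓕 h ξ‖^2 * Real.exp (-π * εf n * ξ^2))) Filter.atTop
          (nhds (ENNReal.ofReal (‖𝓕 h ξ‖^2))) := by
        apply ENNReal.tendsto_ofReal
        have h0 : Filter.Tendsto (fun n : ℕ => -π * εf n * ξ^2) Filter.atTop (nhds 0) := by
          simp only [hεf]
          have h1 : Filter.Tendsto (fun n : ℕ => (1:ℝ)/(n+1)) Filter.atTop (nhds 0) :=
            tendsto_one_div_add_atTop_nhds_zero_nat
          have h2 := (h1.const_mul (-π)).mul_const (ξ^2)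
          simpa [neg_mul, one_div] using h2
        have hexp : Filter.Tendsto (fun n : ℕ => Real.exp (-π * εf n * ξ^2)) Filter.atTop
            (nhds 1) := by
          have := (Real.continuous_exp.continuousAt (x := (0:ℝ))).tendsto.comp h0
          simpa [Function.comp_def] using this
        have := hexp.const_mul (‖𝓕 h ξ‖^2)
        simpa using this
      rw [Real.norm_eq_abs, _root_.abs_of_nonneg (by positivity)]
      exact (tendsto_nhds_unique (tendsto_atTop_iSup hmono) htend).symm
    calc ∫⁻ ξ : ℝ, ENNReal.ofReal ‖(‖𝓕 h ξ‖^2)‖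
        = ∫⁻ ξ : ℝ, ⨆ n : ℕ, ENNReal.ofReal (‖𝓕 h ξ‖^2 * Real.exp (-π * εf n * ξ^2)) := by
          apply lintegral_congr; intro ξ; exact hsup ξ
      _ = ⨆ n : ℕ, ∫⁻ ξ : ℝ, ENNReal.ofReal (‖𝓕 h ξ‖^2 * Real.exp (-π * εf n * ξ^2)) := by
          apply lintegral_iSup'
          · intro n
            apply Measurable.aemeasurable
            apply Measurable.ennreal_ofReal
            exact ((hFc.norm.pow 2).mul (by fun_prop)).measurable
          · filter_upwards with ξ
            intro m n hmn
            apply ENNReal.ofReal_le_ofReal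
            apply mul_le_mul_of_nonneg_left _ (by positivity)
            apply Real.exp_le_exp.mpr
            have hkey := mul_le_mul_of_nonneg_right
              (mul_le_mul_of_nonneg_left (hεanti m n hmn) Real.pi_pos.le) (sq_nonneg ξ)
            linarith
      _ ≤ ENNReal.ofReal (M * L) := iSup_le hbd
      _ < ⊤ := ENNReal.ofReal_lt_top

/-- Condition C4 with `τ = 2`: if `S` is `(k+1)`-times continuously differentiable with
polynomially growing `(k+1)`-st derivative and satisfies the drift tail condition, then
the Fourier transform `φ` of the invariant density `f_S` satisfies
`∫ |λ|^{2k+4} |φ(λ)|² dλ < ∞`. -/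
theorem stmt6 (k : ℕ) (hk : 1 ≤ k) (S : ℝ → ℝ) (hS : ContDiff ℝ (k + 1) S)
    (htail : ∃ A ≥ (0 : ℝ), ∃ c > (0 : ℝ),
      (∀ x ≥ A, S x ≤ -c) ∧ (∀ x ≤ -A, c ≤ S x))
    (C₀ ν : ℝ) (hC₀ : 0 < C₀) (hν : 0 ≤ ν)
    (hgrowth : ∀ x : ℝ, |iteratedDeriv (k + 1) S x| ≤ C₀ * (1 + |x| ^ ν)) :
    Integrable (fun l : ℝ =>
      |l| ^ (2 * k + 4) *
        ‖∫ x : ℝ, Complex.exp (Complex.I * l * x) *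
          ((Real.exp (2 * ∫ t in (0:ℝ)..x, S t) /
            ∫ y : ℝ, Real.exp (2 * ∫ t in (0:ℝ)..y, S t) : ℝ) : ℂ)‖ ^ 2) := by
  classical
  obtain ⟨A, hA, c, hc, ht1, ht2⟩ := htail
  have hS' : ContDiff ℝ ((k+1 : ℕ)) S := by exact_mod_cast hS
  have hSc : Continuous S := hS'.continuous
  obtain ⟨Cs, hCs, Ns, hSg⟩ := S_derivs_growth k S hS' C₀ ν hC₀ hν hgrowth
  have hqf := qseq_facts k S hS' hCs hSg
  obtain ⟨K, hK, hKbd⟩ := hG_tail k S hS' A c hA hc hSc ht1 ht2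
  have hGcont : Continuous (Gfun S) := (hG_contDiff k S hS').continuous
  have hGpos : ∀ x, 0 < Gfun S x := hG_pos S
  have hGdom : Integrable (fun x : ℝ => K * Real.exp (-(2*c) * |x|)) :=
    (integrable_exp_neg_abs (by positivity)).const_mul K
  have hGint : Integrable (Gfun S) := by
    apply hGdom.mono' hGcont.aestronglyMeasurable
    filter_upwards with x
    rw [Real.norm_eq_abs, _root_.abs_of_pos (hGpos x)]
    exact hKbd x
  set Z : ℝ := ∫ y, Gfun S y with hZ
  have hZpos : 0 < Z := by
    rw [hZ, MeasureTheory.integral_pos_iff_support_of_nonneg_ae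
      (Filter.Eventually.of_forall fun x => (hGpos x).le) hGint]
    have hsupp : Function.support (Gfun S) = Set.univ :=
      Set.eq_univ_of_forall (fun x => (hGpos x).ne')
    rw [hsupp]
    simp
  -- smoothness of complex version
  have hGCc : ContDiff ℝ ((k+2:ℕ)) (GfunC S) := by
    have := Complex.ofRealCLM.contDiff.comp (hG_contDiff k S hS')
    exact this
  have hiterd := hGC_iteratedDeriv k S hSc (fun m hm => (hqf m hm).1)
  -- decay bound for iterated derivatives of GfunC
  have hbound : ∀ m, m ≤ k+2 → ∃ B, 0 < B ∧ ∀ x : ℝ,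
      ‖iteratedDeriv m (GfunC S) x‖ ≤ B * Real.exp (-c * |x|) := by
    intro m hm
    obtain ⟨C, hC, N, hqb⟩ := (hqf m hm).2
    obtain ⟨Cp, hCp, hpoly⟩ := poly_le_exp N hc
    refine ⟨C * Cp * K, by positivity, fun x => ?_⟩
    rw [hiterd m hm]
    rw [Complex.norm_real, Real.norm_eq_abs, abs_mul, _root_.abs_of_pos (hGpos x)]
    have h1 : |qseq S m x| ≤ C * (1+|x|)^N := by simpa using hqb 0 (by omega) x
    have h2 : Gfun S x ≤ K * Real.exp (-(2*c) * |x|) := hKbd x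
    have h3 : (1+|x|)^N ≤ Cp * Real.exp (c * |x|) := hpoly |x| (abs_nonneg x)
    calc |qseq S m x| * Gfun S x
        ≤ (C * (1+|x|)^N) * (K * Real.exp (-(2*c)*|x|)) :=
          mul_le_mul h1 h2 (hGpos x).le (by positivity)
      _ ≤ (C * (Cp * Real.exp (c*|x|))) * (K * Real.exp (-(2*c)*|x|)) := by
          apply mul_le_mul_of_nonneg_right _ (by positivity)
          exact mul_le_mul_of_nonneg_left h3 hC.le
      _ = C * Cp * K * (Real.exp (c*|x|) * Real.exp (-(2*c)*|x|)) := by ring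
      _ = C * Cp * K * Real.exp (-c * |x|) := by
          rw [← Real.exp_add]; congr 2; ring
  -- integrability of all iterated derivatives
  have hIint : ∀ m, m ≤ k+2 → Integrable (iteratedDeriv m (GfunC S)) := by
    intro m hm
    obtain ⟨B, hB, hBbd⟩ := hbound m hm
    have hcont : Continuous (iteratedDeriv m (GfunC S)) :=
      hGCc.continuous_iteratedDeriv m (by exact_mod_cast hm)
    apply ((integrable_exp_neg_abs hc).const_mul B).mono' hcont.aestronglyMeasurable
    filter_upwards with x
    exact hBbd x
  -- Fourier derivative relation
  have hGCc' : ContDiff ℝ ((((k+2:ℕ) : ℕ∞)) : WithTop ℕ∞) (GfunC S) := by exact_mod_cast hGCc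
  have hFrel := Real.fourier_iteratedDeriv (N := ((k+2:ℕ) : ℕ∞)) (n := k+2) hGCc'
      (fun n hn => hIint n (by exact_mod_cast hn)) (by exact_mod_cast le_refl (k+2))
  -- L² bound via planch
  obtain ⟨B2, hB2, hB2bd⟩ := hbound (k+2) le_rfl
  have hhcont : Continuous (iteratedDeriv (k+2) (GfunC S)) :=
    hGCc.continuous_iteratedDeriv (k+2) (le_refl _)
  have hplanch : Integrable (fun ξ : ℝ => ‖𝓕 (iteratedDeriv (k+2) (GfunC S)) ξ‖^2) := by
    apply planch _ hhcont (hIint (k+2) le_rfl) B2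
    intro x
    calc ‖iteratedDeriv (k+2) (GfunC S) x‖ ≤ B2 * Real.exp (-c * |x|) := hB2bd x
      _ ≤ B2 * 1 := by
          apply mul_le_mul_of_nonneg_left _ hB2.le
          rw [← Real.exp_zero]
          apply Real.exp_le_exp.mpr
          have : (0:ℝ) ≤ c * |x| := by positivity
          linarith
      _ = B2 := mul_one _
  have hRne : ((-(2*π)⁻¹ : ℝ)) ≠ 0 := by
    have := Real.pi_pos
    simp
  have hcomp : Integrable (fun l : ℝ =>
      ‖𝓕 (iteratedDeriv (k+2) (GfunC S)) ((-(2*π)⁻¹) * l)‖^2) :=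
    hplanch.comp_mul_left' hRne
  apply ((hcomp.const_mul ((1/Z)^2)).congr ?_)
  filter_upwards with l
  show (1/Z)^2 * ‖𝓕 (iteratedDeriv (k+2) (GfunC S)) ((-(2*π)⁻¹) * l)‖^2 =
    |l| ^ (2 * k + 4) * ‖∫ x : ℝ, Complex.exp (Complex.I * l * x) *
      ((Gfun S x / Z : ℝ) : ℂ)‖ ^ 2
  set w : ℝ := (-(2*π)⁻¹) * l with hw
  -- identify the integral with the Fourier transform
  have hker : ∀ x : ℝ, Complex.exp (Complex.I * l * x) * ((Gfun S x / Z : ℝ) : ℂ) =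
      (1/(Z:ℂ)) * (Complex.exp (↑(-2 * π * (x * w)) * Complex.I) * GfunC S x) := by
    intro x
    have hexp : (↑(-2 * π * (x * w)) : ℂ) * Complex.I = Complex.I * l * x := by
      have hr : -2 * π * (x * w) = x * l := by
        rw [hw]; field_simp
      rw [hr]; push_cast; ring
    rw [hexp]
    have hcast : ((Gfun S x / Z : ℝ) : ℂ) = (Gfun S x : ℂ) / (Z : ℂ) := by push_cast; ring
    rw [hcast]
    have : GfunC S x = ((Gfun S x : ℝ) : ℂ) := rfl
    rw [this]
    ring
  have hEq1 : (∫ x : ℝ, Complex.exp (Complex.I * l * x) * ((Gfun S x / Z : ℝ) : ℂ)) =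
      (1/(Z:ℂ)) * 𝓕 (GfunC S) w := by
    calc ∫ x : ℝ, Complex.exp (Complex.I * l * x) * ((Gfun S x / Z : ℝ) : ℂ)
        = ∫ x : ℝ, (1/(Z:ℂ)) * (Complex.exp (↑(-2 * π * (x * w)) * Complex.I) * GfunC S x) := by
          congr 1; funext x; exact hker x
      _ = (1/(Z:ℂ)) * ∫ x : ℝ, Complex.exp (↑(-2 * π * (x * w)) * Complex.I) * GfunC S x :=
          MeasureTheory.integral_const_mul _ _
      _ = (1/(Z:ℂ)) * 𝓕 (GfunC S) w := by
          congr 1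
          rw [Real.fourier_eq']
          simp [RCLike.inner_apply, smul_eq_mul]
          simp_rw [mul_comm (w:ℂ)]
  have hFnorm : ‖𝓕 (iteratedDeriv (k+2) (GfunC S)) w‖ = |l|^(k+2) * ‖𝓕 (GfunC S) w‖ := by
    rw [hFrel]
    rw [norm_smul, norm_pow]
    congr 2
    have hπ : (0:ℝ) < π := Real.pi_pos
    have h1 : ‖(2 * (π:ℂ) * Complex.I * (w:ℂ))‖ = 2 * π * |w| := by
      simp [norm_mul, Complex.norm_real, Real.norm_eq_abs, Complex.norm_I,
        _root_.abs_of_pos hπ]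
    rw [h1, hw, abs_mul]
    rw [show |(-(2*π)⁻¹ : ℝ)| = (2*π)⁻¹ by
      rw [abs_neg, _root_.abs_of_pos (by positivity)]]
    field_simp
  have hZC : ‖(1/(Z:ℂ))‖ = 1/Z := by
    rw [norm_div, norm_one, Complex.norm_real, Real.norm_eq_abs, _root_.abs_of_pos hZpos]
  calc (1/Z)^2 * ‖𝓕 (iteratedDeriv (k+2) (GfunC S)) w‖^2
      = (1/Z)^2 * ((|l|^(k+2)) * ‖𝓕 (GfunC S) w‖)^2 := by rw [hFnorm]
    _ = (|l|^(k+2))^2 * ((1/Z) * ‖𝓕 (GfunC S) w‖)^2 := by ring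
    _ = |l| ^ (2*k+4) * ((1/Z) * ‖𝓕 (GfunC S) w‖)^2 := by
        rw [← pow_mul]
        congr 2
        omega
    _ = |l| ^ (2*k+4) * ‖∫ x : ℝ, Complex.exp (Complex.I * l * x) *
          ((Gfun S x / Z : ℝ) : ℂ)‖ ^ 2 := by
        rw [hEq1, norm_mul, hZC]
end

section
/- Let (Ω, 𝔉, μ) be a probability space, let L : Ω → [0, ∞) be measurable, let ν be the measure with density L with respect to μ, let Q : Ω → ℝ be measurable, and let ε > 0. Then ∫ Q² dν ≤ ε ∫ Q² dμ + (∫ Q⁴ dν)^{1/2} · (ν{ω : L(ω) > ε})^{1/2}. -/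
open MeasureTheory

set_option maxHeartbeats 1000000

/-- Abstract change-of-measure inequality: with `ν = L ⋅ μ`,
`∫ Q² dν ≤ ε ∫ Q² dμ + (∫ Q⁴ dν)^{1/2} (ν{L > ε})^{1/2}`. -/
theorem stmt7 {Ω : Type*} [MeasurableSpace Ω] (μ : Measure Ω) [IsProbabilityMeasure μ]
    (L : Ω → ℝ) (hL : Measurable L) (hL0 : ∀ ω, 0 ≤ L ω)
    (Q : Ω → ℝ) (hQ : Measurable Q) (ε : ℝ) (hε : 0 < ε) :
    (∫⁻ ω, ENNReal.ofReal (Q ω ^ 2) ∂(μ.withDensity fun ω => ENNReal.ofReal (L ω)))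
      ≤ ENNReal.ofReal ε * (∫⁻ ω, ENNReal.ofReal (Q ω ^ 2) ∂μ)
        + (∫⁻ ω, ENNReal.ofReal (Q ω ^ 4)
              ∂(μ.withDensity fun ω => ENNReal.ofReal (L ω))) ^ ((1 : ℝ) / 2)
          * ((μ.withDensity fun ω => ENNReal.ofReal (L ω)) {ω | ε < L ω}) ^ ((1 : ℝ) / 2) := by
  set ν := μ.withDensity fun ω => ENNReal.ofReal (L ω) with hν
  set f : Ω → ENNReal := fun ω => ENNReal.ofReal (Q ω ^ 2) with hf
  have hfm : Measurable f := (hQ.pow_const 2).ennreal_ofReal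
  have hA : MeasurableSet {ω | ε < L ω} := measurableSet_lt measurable_const hL
  rw [← lintegral_add_compl f hA (μ := ν), add_comm]
  gcongr
  · -- part on {L ≤ ε}
    rw [hν, restrict_withDensity hA.compl,
      lintegral_withDensity_eq_lintegral_mul _ hL.ennreal_ofReal hfm]
    calc ∫⁻ ω in {ω | ε < L ω}ᶜ, ENNReal.ofReal (L ω) * f ω ∂μ
        ≤ ∫⁻ ω in {ω | ε < L ω}ᶜ, ENNReal.ofReal ε * f ω ∂μ := by
          refine setLIntegral_mono (measurable_const.mul hfm) fun ω hω => ?_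
          have : L ω ≤ ε := not_lt.mp hω
          exact mul_le_mul_left (ENNReal.ofReal_le_ofReal this) _
      _ = ENNReal.ofReal ε * ∫⁻ ω in {ω | ε < L ω}ᶜ, f ω ∂μ := lintegral_const_mul _ hfm
      _ ≤ ENNReal.ofReal ε * ∫⁻ ω, f ω ∂μ := by
          gcongr
          exact Measure.restrict_le_self
  · -- Cauchy–Schwarz part
    have hg : Measurable ({ω | ε < L ω}.indicator (fun _ => (1 : ENNReal))) :=
      measurable_const.indicator hA
    have key := ENNReal.lintegral_mul_le_Lp_mul_Lq ν (p := 2) (q := 2)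
      ⟨by norm_num, by norm_num, by norm_num⟩
      hfm.aemeasurable hg.aemeasurable
    have h1 : ∫⁻ ω, (f * {ω | ε < L ω}.indicator (fun _ => (1 : ENNReal))) ω ∂ν
        = ∫⁻ ω in {ω | ε < L ω}, f ω ∂ν := by
      rw [← lintegral_indicator hA]
      congr 1; ext ω
      by_cases hω : ω ∈ {ω | ε < L ω} <;>
        simp [Set.indicator_of_mem, Set.indicator_of_notMem, hω]
    have h2 : ∫⁻ ω, f ω ^ (2 : ℝ) ∂ν = ∫⁻ ω, ENNReal.ofReal (Q ω ^ 4) ∂ν := by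
      congr 1; ext ω
      have : ((2 : ℝ) : ℝ) = ((2 : ℕ) : ℝ) := by norm_num
      rw [hf, this, ENNReal.rpow_natCast, ← ENNReal.ofReal_pow (sq_nonneg _)]
      ring_nf
    have h3 : ∫⁻ ω, ({ω | ε < L ω}.indicator (fun _ => (1 : ENNReal))) ω ^ (2 : ℝ) ∂ν
        = ν {ω | ε < L ω} := by
      rw [← lintegral_indicator_one hA]
      congr 1; ext ω
      by_cases hω : ω ∈ {ω | ε < L ω} <;>
        simp [Set.indicator_of_mem, Set.indicator_of_notMem, hω]
    rw [h1, h2, h3] at key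
    exact key
end

section
/- Let k ≥ 1 be an integer and let α > 0, R > 0 and T > 0. Then the supremum over all φ ∈ L²(ℝ, ℂ) with ∫_ℝ λ^{2k+2} |φ(λ)|² dλ ≤ 8πR of the quantity (1/2π)·[T ∫_ℝ λ² (1 − h_{α,k}(λ))² |φ(λ)|² dλ + 4 ∫_ℝ h_{α,k}(λ)² dλ] equals 4RTα^{2k} + 8k²/(π α (k+1)(2k+1)). -/
open MeasureTheory
open scoped ENNReal

lemma hsq_integral (k : ℕ) (hk : 1 ≤ k) (α : ℝ) (hα : 0 < α) :
    (∫ l : ℝ, (max (1 - |α * l| ^ (k : ℝ)) 0) ^ 2)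
      = 4 * (k:ℝ)^2 / (α * ((k:ℝ)+1) * (2*(k:ℝ)+1)) := by
  have hα' : α ≠ 0 := ne_of_gt hα
  simp_rw [Real.rpow_natCast]
  have h1 : (∫ l : ℝ, (max (1 - |α * l| ^ k) 0) ^ 2)
      = ∫ l : ℝ, (fun u : ℝ => (max (1 - |α * u| ^ k) 0) ^ 2) |l| := by
    congr 1; funext l; simp [abs_mul, abs_abs]
  rw [h1, integral_comp_abs (f := fun u : ℝ => (max (1 - |α * u| ^ k) 0) ^ 2)]
  have h2 : ∫ x in Set.Ioi (0:ℝ), (max (1 - |α * x| ^ k) 0) ^ 2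
      = ∫ x in Set.Ioi (0:ℝ),
          Set.indicator (Set.Ioc 0 (1/α)) (fun x => (1 - (α * x) ^ k) ^ 2) x := by
    refine setIntegral_congr_fun measurableSet_Ioi (fun x hx => ?_)
    have hx0 : (0:ℝ) < x := hx
    have habs : |α * x| = α * x := abs_of_pos (mul_pos hα hx0)
    rw [habs]
    by_cases hxc : x ≤ 1/α
    · have hmem : x ∈ Set.Ioc (0:ℝ) (1/α) := ⟨hx0, hxc⟩
      rw [Set.indicator_of_mem hmem]
      have : (α * x) ^ k ≤ 1 := by
        exact pow_le_one₀ (le_of_lt (mul_pos hα hx0)) ((le_div_iff₀' hα).mp hxc)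
      rw [max_eq_left (by linarith)]
    · rw [Set.indicator_of_notMem (fun h => hxc h.2)]
      have hx1 : 1 ≤ α * x := by
        rw [not_le] at hxc
        exact le_of_lt ((div_lt_iff₀' hα).mp hxc)
      have : 1 ≤ (α * x) ^ k := one_le_pow₀ hx1
      rw [max_eq_right (by linarith)]
      norm_num
  rw [h2, setIntegral_indicator measurableSet_Ioc]
  have h3 : Set.Ioi (0:ℝ) ∩ Set.Ioc 0 (1/α) = Set.Ioc 0 (1/α) := by
    rw [Set.inter_eq_self_of_subset_right Set.Ioc_subset_Ioi_self]
  rw [h3, ← intervalIntegral.integral_of_le (by positivity : (0:ℝ) ≤ 1/α)]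
  rw [intervalIntegral.integral_congr
    (g := fun x => 1 - 2 * α^k * x^k + α^(2*k) * x^(2*k)) (fun x _ => by ring)]
  have i1 : IntervalIntegrable (fun x : ℝ => 1 - 2 * α^k * x^k) volume 0 (1/α) :=
    ((continuous_const.sub (continuous_const.mul (continuous_pow k))).intervalIntegrable _ _)
  have i2 : IntervalIntegrable (fun x : ℝ => α^(2*k) * x^(2*k)) volume 0 (1/α) :=
    ((continuous_const.mul (continuous_pow _)).intervalIntegrable _ _)
  have i3 : IntervalIntegrable (fun _ : ℝ => (1:ℝ)) volume 0 (1/α) :=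
    (continuous_const.intervalIntegrable _ _)
  have i4 : IntervalIntegrable (fun x : ℝ => 2 * α^k * x^k) volume 0 (1/α) :=
    ((continuous_const.mul (continuous_pow k)).intervalIntegrable _ _)
  rw [intervalIntegral.integral_add i1 i2, intervalIntegral.integral_sub i3 i4,
    intervalIntegral.integral_const, intervalIntegral.integral_const_mul,
    intervalIntegral.integral_const_mul, integral_pow, integral_pow]
  have hz1 : (0:ℝ) ^ (k+1) = 0 := zero_pow (Nat.succ_ne_zero k)
  have hz2 : (0:ℝ) ^ (2*k+1) = 0 := zero_pow (Nat.succ_ne_zero _)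
  rw [hz1, hz2]
  have e1 : (1/α : ℝ)^(k+1) = 1/(α * α^k) := by
    rw [div_pow, one_pow, pow_succ]; ring_nf
  have e2 : (1/α : ℝ)^(2*k+1) = 1/(α * (α^k)^2) := by
    rw [div_pow, one_pow, pow_succ, pow_mul]; ring_nf
  have e3 : (α:ℝ)^(2*k) = (α^k)^2 := by rw [mul_comm, pow_mul]
  rw [e1, e2, e3]
  have hαk : (α:ℝ)^k ≠ 0 := pow_ne_zero _ hα'
  have hk1 : ((k:ℝ)+1) ≠ 0 := by positivity
  have hk2 : (2*(k:ℝ)+1) ≠ 0 := by positivity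
  push_cast
  field_simp
  ring_nf
  simp only [mul_inv_cancel₀ hα', one_mul]
  ring


lemma point_rhs (k : ℕ) (α l : ℝ) :
    (|α * l| ^ k) ^ 2 * l ^ 2 = α ^ (2*k) * l ^ (2*k+2) := by
  rw [← pow_mul, Even.pow_abs ⟨k, by ring⟩, mul_pow]
  ring


lemma point_le (k : ℕ) (α l : ℝ) :
    l ^ 2 * (1 - max (1 - |α * l| ^ (k:ℝ)) 0) ^ 2 ≤ α ^ (2*k) * l ^ (2*k+2) := by
  rw [Real.rpow_natCast, ← point_rhs k α l]
  set t := |α * l| ^ k with ht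
  have ht0 : 0 ≤ t := pow_nonneg (abs_nonneg _) k
  rcases le_or_gt t 1 with h | h
  · rw [max_eq_left (by linarith)]
    have : (1:ℝ) - (1 - t) = t := by ring
    rw [this]; ring_nf; exact le_refl _
  · rw [max_eq_right (by linarith), sub_zero, one_pow, mul_one]
    nlinarith [sq_nonneg l, sq_nonneg (l*t), sq_nonneg (l*(t-1))]


lemma point_eq (k : ℕ) (α l : ℝ) (h : |α * l| ^ k ≤ 1) :
    l ^ 2 * (1 - max (1 - |α * l| ^ (k:ℝ)) 0) ^ 2 = α ^ (2*k) * l ^ (2*k+2) := by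
  rw [Real.rpow_natCast, ← point_rhs k α l, max_eq_left (by linarith)]
  ring


/-- The worst case over the Sobolev-type ellipsoid `∫ λ^{2k+2}|φ(λ)|² dλ ≤ 8πR` of the
risk bound `(1/2π)[T ∫ λ²(1 - h_{α,k}(λ))²|φ(λ)|² dλ + 4 ∫ h_{α,k}(λ)² dλ]` equals
`4RTα^{2k} + 8k²/(πα(k+1)(2k+1))`, and is attained. -/
theorem stmt15 (k : ℕ) (hk : 1 ≤ k) (α R T : ℝ) (hα : 0 < α) (hR : 0 < R) (hT : 0 < T) :
    IsGreatest
      {r : ℝ | ∃ φ : ℝ → ℂ, MemLp φ 2 (volume : Measure ℝ) ∧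
        (∫⁻ l : ℝ, ENNReal.ofReal (l ^ (2 * k + 2) * ‖φ l‖ ^ 2))
          ≤ ENNReal.ofReal (8 * Real.pi * R) ∧
        r = (1 / (2 * Real.pi)) *
          (T * (∫⁻ l : ℝ, ENNReal.ofReal
                (l ^ 2 * (1 - max (1 - |α * l| ^ (k : ℝ)) 0) ^ 2 * ‖φ l‖ ^ 2)).toReal
            + 4 * ∫ l : ℝ, (max (1 - |α * l| ^ (k : ℝ)) 0) ^ 2)}
      (4 * R * T * α ^ (2 * k) +
        8 * (k : ℝ) ^ 2 / (Real.pi * α * ((k : ℝ) + 1) * (2 * (k : ℝ) + 1))) := by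
  have hπ : 0 < Real.pi := Real.pi_pos
  have hα' : α ≠ 0 := ne_of_gt hα
  have hk1 : ((k:ℝ)+1) ≠ 0 := by positivity
  have hk2 : (2*(k:ℝ)+1) ≠ 0 := by positivity
  have hJ := hsq_integral k hk α hα
  constructor
  · -- membership: explicit maximizer
    set a : ℝ := 1/(2*α) with ha_def
    set b : ℝ := 1/α with hb_def
    have ha0 : 0 < a := by positivity
    have hab : a < b := by
      rw [ha_def, hb_def, div_lt_div_iff₀ (by positivity) hα]
      nlinarith
    set S : Set ℝ := Set.Ioc a b with hS_def
    set I : ℝ := ∫ x in a..b, x^(2*k+2) with hI_def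
    have hIval : I = (b^(2*k+3) - a^(2*k+3))/((2*(k:ℝ)*1 + 2) + 1) := by
      rw [hI_def, integral_pow]; push_cast; ring_nf
    have hI0 : 0 < I := by
      rw [hIval]
      have : a^(2*k+3) < b^(2*k+3) :=
        pow_lt_pow_left₀ hab (le_of_lt ha0) (Nat.succ_ne_zero _)
      have h3 : (0:ℝ) < (2*(k:ℝ)*1 + 2) + 1 := by positivity
      exact div_pos (by linarith) h3
    have hI' : I ≠ 0 := ne_of_gt hI0
    set C0 : ℝ := Real.sqrt (8*Real.pi*R / I) with hC0_def
    have hC00 : 0 ≤ C0 := Real.sqrt_nonneg _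
    have hC0sq : C0^2 = 8*Real.pi*R / I := Real.sq_sqrt (by positivity)
    set φ : ℝ → ℂ := S.indicator (fun _ => (C0:ℂ)) with hφ_def
    have hnorm : ∀ l : ℝ, ‖φ l‖^2 = S.indicator (fun _ => C0^2) l := by
      intro l
      by_cases hl : l ∈ S
      · rw [Set.indicator_of_mem hl]
        rw [hφ_def, Set.indicator_of_mem hl, Complex.norm_real, Real.norm_eq_abs, abs_of_nonneg hC00]
      · rw [Set.indicator_of_notMem hl, hφ_def, Set.indicator_of_notMem hl]
        simp
    have hint : IntegrableOn (fun l : ℝ => l^(2*k+2) * C0^2) S volume :=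
      ((continuous_pow _).mul continuous_const).integrableOn_Ioc
    have hnn : 0 ≤ᵐ[volume.restrict S] (fun l : ℝ => l^(2*k+2) * C0^2) :=
      Filter.Eventually.of_forall fun l =>
        mul_nonneg (Even.pow_nonneg ⟨k+1, by ring⟩ l) (sq_nonneg C0)
    have hlin2 : (∫⁻ l : ℝ, ENNReal.ofReal (l ^ (2*k+2) * ‖φ l‖^2))
        = ENNReal.ofReal (8*Real.pi*R) := by
      have hpt : ∀ l : ℝ, ENNReal.ofReal (l ^ (2*k+2) * ‖φ l‖^2)
          = S.indicator (fun l => ENNReal.ofReal (l^(2*k+2) * C0^2)) l := by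
        intro l
        by_cases hl : l ∈ S
        · rw [Set.indicator_of_mem hl, hnorm l, Set.indicator_of_mem hl]
        · rw [Set.indicator_of_notMem hl, hnorm l, Set.indicator_of_notMem hl]
          simp
      simp_rw [hpt]
      rw [lintegral_indicator measurableSet_Ioc,
        ← ofReal_integral_eq_lintegral_ofReal hint hnn]
      congr 1
      rw [integral_mul_const, ← intervalIntegral.integral_of_le hab.le, ← hI_def, hC0sq]
      field_simp
    have hpow : ∀ l ∈ S, |α * l| ^ k ≤ 1 := by
      intro l hl
      have hl0 : 0 < l := lt_trans ha0 hl.1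
      have hαl : α * l ≤ 1 := by
        have := hl.2
        rw [hb_def] at this
        calc α * l ≤ α * (1/α) := by
              exact mul_le_mul_of_nonneg_left this (le_of_lt hα)
          _ = 1 := by field_simp
      rw [abs_of_pos (mul_pos hα hl0)]
      exact pow_le_one₀ (le_of_lt (mul_pos hα hl0)) hαl
    have hlin1 : (∫⁻ l : ℝ, ENNReal.ofReal
          (l ^ 2 * (1 - max (1 - |α * l| ^ (k : ℝ)) 0) ^ 2 * ‖φ l‖ ^ 2))
        = ENNReal.ofReal (α^(2*k)) * ENNReal.ofReal (8*Real.pi*R) := by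
      have hpt : ∀ l : ℝ, ENNReal.ofReal
            (l ^ 2 * (1 - max (1 - |α * l| ^ (k : ℝ)) 0) ^ 2 * ‖φ l‖ ^ 2)
          = ENNReal.ofReal (α^(2*k)) * ENNReal.ofReal (l^(2*k+2) * ‖φ l‖^2) := by
        intro l
        by_cases hl : l ∈ S
        · rw [← ENNReal.ofReal_mul (by positivity)]
          congr 1
          rw [point_eq k α l (hpow l hl)]
          ring
        · have h0 : ‖φ l‖ = 0 := by
            rw [hφ_def, Set.indicator_of_notMem hl]; simp
          rw [h0]
          simp
      simp_rw [hpt]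
      rw [lintegral_const_mul' _ _ ENNReal.ofReal_ne_top, hlin2]
    refine ⟨φ, memLp_indicator_const 2 measurableSet_Ioc _
      (Or.inr (by rw [Real.volume_Ioc]; exact ENNReal.ofReal_ne_top)), le_of_eq hlin2, ?_⟩
    rw [hlin1, hJ, ← ENNReal.ofReal_mul (by positivity),
      ENNReal.toReal_ofReal (by positivity)]
    field_simp
    ring
  · -- upper bound
    rintro r ⟨φ, hφ2, hcon, rfl⟩
    have hle : (∫⁻ l : ℝ, ENNReal.ofReal
          (l ^ 2 * (1 - max (1 - |α * l| ^ (k : ℝ)) 0) ^ 2 * ‖φ l‖ ^ 2))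
        ≤ ENNReal.ofReal (8*Real.pi*R*α^(2*k)) := by
      calc (∫⁻ l : ℝ, ENNReal.ofReal
            (l ^ 2 * (1 - max (1 - |α * l| ^ (k : ℝ)) 0) ^ 2 * ‖φ l‖ ^ 2))
          ≤ ∫⁻ l : ℝ, ENNReal.ofReal (α^(2*k)) * ENNReal.ofReal (l^(2*k+2) * ‖φ l‖^2) := by
            refine lintegral_mono fun l => ?_
            rw [← ENNReal.ofReal_mul (by positivity)]
            refine ENNReal.ofReal_le_ofReal ?_
            have h := mul_le_mul_of_nonneg_right (point_le k α l) (sq_nonneg ‖φ l‖)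
            calc l ^ 2 * (1 - max (1 - |α * l| ^ (k : ℝ)) 0) ^ 2 * ‖φ l‖ ^ 2
                ≤ α ^ (2*k) * l ^ (2*k+2) * ‖φ l‖ ^ 2 := h
              _ = α ^ (2*k) * (l ^ (2*k+2) * ‖φ l‖ ^ 2) := by ring
        _ = ENNReal.ofReal (α^(2*k)) *
              ∫⁻ l : ℝ, ENNReal.ofReal (l^(2*k+2) * ‖φ l‖^2) :=
            lintegral_const_mul' _ _ ENNReal.ofReal_ne_top
        _ ≤ ENNReal.ofReal (α^(2*k)) * ENNReal.ofReal (8*Real.pi*R) :=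
            mul_le_mul_right hcon _
        _ = ENNReal.ofReal (8*Real.pi*R*α^(2*k)) := by
            rw [← ENNReal.ofReal_mul (by positivity)]
            ring_nf
    have hto : (∫⁻ l : ℝ, ENNReal.ofReal
          (l ^ 2 * (1 - max (1 - |α * l| ^ (k : ℝ)) 0) ^ 2 * ‖φ l‖ ^ 2)).toReal
        ≤ 8*Real.pi*R*α^(2*k) :=
      ENNReal.toReal_le_of_le_ofReal (by positivity) hle
    rw [hJ]
    have key : (1/(2*Real.pi)) * (T*(8*Real.pi*R*α^(2*k))
          + 4*(4*(k:ℝ)^2/(α*((k:ℝ)+1)*(2*(k:ℝ)+1))))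
        = 4 * R * T * α ^ (2 * k) +
          8 * (k : ℝ) ^ 2 / (Real.pi * α * ((k : ℝ) + 1) * (2 * (k : ℝ) + 1)) := by
      field_simp
      ring
    calc (1/(2*Real.pi)) * (T * (∫⁻ l : ℝ, ENNReal.ofReal
            (l ^ 2 * (1 - max (1 - |α * l| ^ (k : ℝ)) 0) ^ 2 * ‖φ l‖ ^ 2)).toReal
          + 4*(4*(k:ℝ)^2/(α*((k:ℝ)+1)*(2*(k:ℝ)+1))))
        ≤ (1/(2*Real.pi)) * (T*(8*Real.pi*R*α^(2*k))
            + 4*(4*(k:ℝ)^2/(α*((k:ℝ)+1)*(2*(k:ℝ)+1)))) := by gcongr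
      _ = _ := key
end

section
/- Let k ≥ 1 be an integer and let R > 0 and T > 0. Then the infimum over α > 0 of the supremum over all φ ∈ L²(ℝ, ℂ) with ∫_ℝ λ^{2k+2} |φ(λ)|² dλ ≤ 8πR of (1/2π)·[T ∫_ℝ λ² (1 − h_{α,k}(λ))² |φ(λ)|² dλ + 4 ∫_ℝ h_{α,k}(λ)² dλ] equals 4 P(k,R) T^{1/(2k+1)}. -/
open MeasureTheory
open scoped ENNReal

lemma int01 (k : ℕ) : ∫ u in (0:ℝ)..1, (1 - u ^ k) ^ 2
    = 1 - 2 / ((k:ℝ)+1) + 1 / (2*(k:ℝ)+1) := by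
  have h : ∀ u : ℝ, (1 - u ^ k) ^ 2 = 1 - 2 * u ^ k + u ^ (2*k) := by
    intro u; rw [pow_mul]; ring
  simp_rw [h]
  rw [intervalIntegral.integral_add ((intervalIntegrable_const (c:=(1:ℝ))).sub
      ((intervalIntegral.intervalIntegrable_pow k).const_mul 2))
      (intervalIntegral.intervalIntegrable_pow (2*k)),
    intervalIntegral.integral_sub (intervalIntegrable_const (c:=(1:ℝ)))
      ((intervalIntegral.intervalIntegrable_pow k).const_mul 2),
    intervalIntegral.integral_const_mul, integral_pow, integral_pow]
  have hk1 : ((k:ℝ)+1) ≠ 0 := by positivity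
  have hk2 : (2*(k:ℝ)+1) ≠ 0 := by positivity
  simp only [intervalIntegral.integral_const, smul_eq_mul]
  push_cast
  field_simp
  simp only [one_pow, zero_pow (Nat.add_one_ne_zero _), sub_zero]
  ring

lemma int_hsq (k : ℕ) (hk : 1 ≤ k) :
    ∫ u : ℝ, (max (1 - |u| ^ k) 0) ^ 2
      = 4 * (k:ℝ)^2 / (((k:ℝ)+1) * (2*(k:ℝ)+1)) := by
  have habs : ∫ u : ℝ, (max (1 - |u| ^ k) 0) ^ 2
      = 2 * ∫ u in Set.Ioi (0:ℝ), (max (1 - u ^ k) 0) ^ 2 :=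
    integral_comp_abs (f := fun t => (max (1 - t ^ k) 0) ^ 2)
  rw [habs]
  have hcong : ∫ u in Set.Ioi (0:ℝ), (max (1 - u ^ k) 0) ^ 2
      = ∫ u in Set.Ioi (0:ℝ), (Set.Ioc (0:ℝ) 1).indicator (fun u => (1 - u ^ k) ^ 2) u := by
    refine setIntegral_congr_fun measurableSet_Ioi (fun u hu => ?_)
    simp only [Set.mem_Ioi] at hu
    by_cases h1 : u ≤ 1
    · rw [Set.indicator_of_mem (by exact ⟨hu, h1⟩)]
      rw [max_eq_left]
      have : u ^ k ≤ 1 := pow_le_one₀ hu.le h1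
      linarith
    · rw [Set.indicator_of_notMem (by simp [h1])]
      have h2 : (1:ℝ) ≤ u ^ k := one_le_pow₀ (by linarith)
      rw [max_eq_right (by linarith)]
      norm_num
  rw [hcong, setIntegral_indicator measurableSet_Ioc]
  have : Set.Ioi (0:ℝ) ∩ Set.Ioc (0:ℝ) 1 = Set.Ioc (0:ℝ) 1 := by
    ext x; simp (config := {contextual := true}) [Set.mem_Ioc, Set.mem_Ioi]
  rw [this, ← intervalIntegral.integral_of_le zero_le_one, int01 k]
  have hk1 : ((k:ℝ)+1) ≠ 0 := by positivity
  have hk2 : (2*(k:ℝ)+1) ≠ 0 := by positivity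
  field_simp
  ring



lemma int_hsq_alpha (k : ℕ) (hk : 1 ≤ k) (α : ℝ) (hα : 0 < α) :
    ∫ l : ℝ, (max (1 - |α * l| ^ (k:ℝ)) 0) ^ 2
      = (4 * (k:ℝ)^2 / (((k:ℝ)+1) * (2*(k:ℝ)+1))) / α := by
  simp_rw [Real.rpow_natCast]
  rw [MeasureTheory.Measure.integral_comp_mul_left (fun u : ℝ => (max (1 - |u| ^ k) 0) ^ 2) α,
    int_hsq k hk, smul_eq_mul, abs_inv, abs_of_pos hα]
  ring

lemma ssup_eq (k : ℕ) (hk : 1 ≤ k) (R T : ℝ) (hR : 0 < R) (hT : 0 < T)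
    (α : ℝ) (hα : 0 < α) :
    sSup {r : ℝ | ∃ φ : ℝ → ℂ, MemLp φ 2 (volume : Measure ℝ) ∧
        (∫⁻ l : ℝ, ENNReal.ofReal (l ^ (2 * k + 2) * ‖φ l‖ ^ 2))
          ≤ ENNReal.ofReal (8 * Real.pi * R) ∧
        r = (1 / (2 * Real.pi)) *
          (T * (∫⁻ l : ℝ, ENNReal.ofReal
                (l ^ 2 * (1 - max (1 - |α * l| ^ (k : ℝ)) 0) ^ 2 * ‖φ l‖ ^ 2)).toReal
            + 4 * ∫ l : ℝ, (max (1 - |α * l| ^ (k : ℝ)) 0) ^ 2)}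
    = 4*R*T*α^(2*k) + (8*(k:ℝ)^2/(Real.pi*((k:ℝ)+1)*(2*(k:ℝ)+1))) / α := by
  have hπ : 0 < Real.pi := Real.pi_pos
  set C : ℝ := 4 * (k:ℝ)^2 / (((k:ℝ)+1) * (2*(k:ℝ)+1)) with hC
  have hIh : ∫ l : ℝ, (max (1 - |α * l| ^ (k:ℝ)) 0) ^ 2 = C / α := int_hsq_alpha k hk α hα
  set V : ℝ := 4*R*T*α^(2*k) + (8*(k:ℝ)^2/(Real.pi*((k:ℝ)+1)*(2*(k:ℝ)+1))) / α with hV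
  have hVeq : (1 / (2 * Real.pi)) * (T * (α^(2*k) * (8*Real.pi*R)) + 4 * (C/α)) = V := by
    rw [hV, hC]
    field_simp
    ring
  -- upper bound
  have hub : ∀ r ∈ {r : ℝ | ∃ φ : ℝ → ℂ, MemLp φ 2 (volume : Measure ℝ) ∧
        (∫⁻ l : ℝ, ENNReal.ofReal (l ^ (2 * k + 2) * ‖φ l‖ ^ 2))
          ≤ ENNReal.ofReal (8 * Real.pi * R) ∧
        r = (1 / (2 * Real.pi)) *
          (T * (∫⁻ l : ℝ, ENNReal.ofReal
                (l ^ 2 * (1 - max (1 - |α * l| ^ (k : ℝ)) 0) ^ 2 * ‖φ l‖ ^ 2)).toReal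
            + 4 * ∫ l : ℝ, (max (1 - |α * l| ^ (k : ℝ)) 0) ^ 2)}, r ≤ V := by
    rintro r ⟨φ, hφ, hcon, rfl⟩
    have key : ∀ l : ℝ, l ^ 2 * (1 - max (1 - |α * l| ^ (k : ℝ)) 0) ^ 2 * ‖φ l‖ ^ 2
        ≤ α^(2*k) * (l ^ (2*k+2) * ‖φ l‖ ^ 2) := by
      intro l
      have h0 : (0:ℝ) ≤ |α*l| ^ (k:ℝ) := Real.rpow_nonneg (abs_nonneg _) _
      have h1 : 1 - max (1 - |α * l| ^ (k : ℝ)) 0 ≤ |α*l| ^ (k:ℝ) := by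
        rcases le_total (1 - |α * l| ^ (k : ℝ)) 0 with h|h
        · rw [max_eq_right h]; linarith
        · rw [max_eq_left h]; linarith
      have h2 : 0 ≤ 1 - max (1 - |α * l| ^ (k : ℝ)) 0 :=
        sub_nonneg.2 (max_le (by linarith) zero_le_one)
      have h3 : (1 - max (1 - |α * l| ^ (k : ℝ)) 0) ^ 2 ≤ (|α*l| ^ (k:ℝ)) ^ 2 :=
        pow_le_pow_left₀ h2 h1 2
      have h4 : (|α*l| ^ (k:ℝ)) ^ 2 = α^(2*k) * l^(2*k) := by
        rw [Real.rpow_natCast, ← pow_mul, show k * 2 = 2 * k by ring, pow_mul, sq_abs]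
        ring
      calc l ^ 2 * (1 - max (1 - |α * l| ^ (k : ℝ)) 0) ^ 2 * ‖φ l‖ ^ 2
          ≤ l ^ 2 * (α^(2*k) * l^(2*k)) * ‖φ l‖ ^ 2 := by
            rw [← h4]
            have hl2 : (0:ℝ) ≤ l ^ 2 := sq_nonneg l
            have hn : (0:ℝ) ≤ ‖φ l‖ ^ 2 := sq_nonneg _
            exact mul_le_mul_of_nonneg_right (mul_le_mul_of_nonneg_left h3 hl2) hn
        _ = α^(2*k) * (l ^ (2*k+2) * ‖φ l‖ ^ 2) := by ring
    have hJ : (∫⁻ l : ℝ, ENNReal.ofReal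
          (l ^ 2 * (1 - max (1 - |α * l| ^ (k : ℝ)) 0) ^ 2 * ‖φ l‖ ^ 2))
        ≤ ENNReal.ofReal (α^(2*k) * (8*Real.pi*R)) := by
      calc (∫⁻ l : ℝ, ENNReal.ofReal
            (l ^ 2 * (1 - max (1 - |α * l| ^ (k : ℝ)) 0) ^ 2 * ‖φ l‖ ^ 2))
          ≤ ∫⁻ l : ℝ, ENNReal.ofReal (α^(2*k) * (l ^ (2*k+2) * ‖φ l‖ ^ 2)) :=
            lintegral_mono (fun l => ENNReal.ofReal_le_ofReal (key l))
        _ = ∫⁻ l : ℝ, ENNReal.ofReal (α^(2*k)) * ENNReal.ofReal (l ^ (2*k+2) * ‖φ l‖ ^ 2) := by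
            congr 1; ext l
            rw [ENNReal.ofReal_mul (by positivity)]
        _ = ENNReal.ofReal (α^(2*k)) * ∫⁻ l : ℝ, ENNReal.ofReal (l ^ (2*k+2) * ‖φ l‖ ^ 2) :=
            lintegral_const_mul' _ _ ENNReal.ofReal_ne_top
        _ ≤ ENNReal.ofReal (α^(2*k)) * ENNReal.ofReal (8*Real.pi*R) := by
            exact mul_le_mul_right hcon _
        _ = ENNReal.ofReal (α^(2*k) * (8*Real.pi*R)) := by
            rw [← ENNReal.ofReal_mul (by positivity)]
    have hJr : (∫⁻ l : ℝ, ENNReal.ofReal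
          (l ^ 2 * (1 - max (1 - |α * l| ^ (k : ℝ)) 0) ^ 2 * ‖φ l‖ ^ 2)).toReal
        ≤ α^(2*k) * (8*Real.pi*R) :=
      ENNReal.toReal_le_of_le_ofReal (by positivity) hJ
    rw [hIh, ← hVeq]
    have h2π : (0:ℝ) < 1 / (2*Real.pi) := by positivity
    apply mul_le_mul_of_nonneg_left _ h2π.le
    have := mul_le_mul_of_nonneg_left hJr hT.le
    linarith
  -- witness φ achieving V
  have hwit : V ∈ {r : ℝ | ∃ φ : ℝ → ℂ, MemLp φ 2 (volume : Measure ℝ) ∧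
        (∫⁻ l : ℝ, ENNReal.ofReal (l ^ (2 * k + 2) * ‖φ l‖ ^ 2))
          ≤ ENNReal.ofReal (8 * Real.pi * R) ∧
        r = (1 / (2 * Real.pi)) *
          (T * (∫⁻ l : ℝ, ENNReal.ofReal
                (l ^ 2 * (1 - max (1 - |α * l| ^ (k : ℝ)) 0) ^ 2 * ‖φ l‖ ^ 2)).toReal
            + 4 * ∫ l : ℝ, (max (1 - |α * l| ^ (k : ℝ)) 0) ^ 2)} := by
    set c : ℝ := Real.sqrt (8*Real.pi*R*(2*(k:ℝ)+3)*α^(2*k+3)) with hc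
    have hc2 : c^2 = 8*Real.pi*R*(2*(k:ℝ)+3)*α^(2*k+3) := Real.sq_sqrt (by positivity)
    set s : Set ℝ := Set.Ioc 0 (1/α) with hs
    set φ : ℝ → ℂ := s.indicator (fun _ => (c:ℂ)) with hφdef
    have hnorm : ∀ l, ‖φ l‖ ^ 2 = s.indicator (fun _ => c^2) l := by
      intro l
      by_cases h : l ∈ s
      · simp [hφdef, Set.indicator_of_mem h, Complex.norm_real, sq_abs]
      · simp [hφdef, Set.indicator_of_notMem h]
    have hmem : MemLp φ 2 (volume : Measure ℝ) :=
      memLp_indicator_const 2 measurableSet_Ioc _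
        (Or.inr (by rw [Real.volume_Ioc]; exact ENNReal.ofReal_ne_top))
    -- the constraint integral
    have hGind : ∀ l : ℝ, l ^ (2*k+2) * ‖φ l‖ ^ 2
        = s.indicator (fun l => l ^ (2*k+2) * c^2) l := by
      intro l
      by_cases h : l ∈ s
      · rw [hnorm l, Set.indicator_of_mem h, Set.indicator_of_mem h]
      · rw [hnorm l, Set.indicator_of_notMem h, Set.indicator_of_notMem h, mul_zero]
    have hGint : Integrable (fun l : ℝ => l ^ (2*k+2) * ‖φ l‖ ^ 2) := by
      rw [show (fun l : ℝ => l ^ (2*k+2) * ‖φ l‖ ^ 2)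
          = s.indicator (fun l => l ^ (2*k+2) * c^2) from funext hGind]
      exact ((continuous_pow (2*k+2)).mul continuous_const).integrableOn_Ioc.integrable_indicator
        measurableSet_Ioc
    have hGval : ∫ l : ℝ, l ^ (2*k+2) * ‖φ l‖ ^ 2 = 8*Real.pi*R := by
      simp_rw [hGind]
      rw [integral_indicator measurableSet_Ioc, ← intervalIntegral.integral_of_le (by positivity)]
      rw [intervalIntegral.integral_mul_const, integral_pow]
      rw [hc2]
      have hα' : α ≠ 0 := ne_of_gt hα
      have h23 : (2*(k:ℝ)+3) ≠ 0 := by positivity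
      have hp : (1/α)^(2*k+2+1) = (α^(2*k+3))⁻¹ := by
        rw [one_div, inv_pow]
      push_cast
      rw [hp]
      field_simp
      ring
    have hlin2 : (∫⁻ l : ℝ, ENNReal.ofReal (l ^ (2*k+2) * ‖φ l‖ ^ 2))
        = ENNReal.ofReal (8*Real.pi*R) := by
      rw [← ofReal_integral_eq_lintegral_ofReal hGint
        (Filter.Eventually.of_forall (fun l => by
          have h1 : (0:ℝ) ≤ l^(2*k+2) := by
            rw [show 2*k+2 = (k+1)*2 by ring, pow_mul]; positivity
          positivity)), hGval]
    refine ⟨φ, hmem, ?_, ?_⟩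
    · rw [show 2 * k + 2 = 2*k+2 from rfl, hlin2]
    · -- the main lintegral equals ofReal (α^(2k) * 8πR)
      have hpt : ∀ l : ℝ, l ^ 2 * (1 - max (1 - |α * l| ^ (k : ℝ)) 0) ^ 2 * ‖φ l‖ ^ 2
          = α^(2*k) * (l ^ (2*k+2) * ‖φ l‖ ^ 2) := by
        intro l
        by_cases h : l ∈ s
        · have hl0 : 0 < l := h.1
          have hl1 : l ≤ 1/α := h.2
          have hαl : 0 < α * l := mul_pos hα hl0
          have hαl1 : α * l ≤ 1 := by
            rw [← mul_le_mul_iff_right₀ hα] at hl1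
            calc α * l ≤ α * (1/α) := by nlinarith
              _ = 1 := by field_simp
          have habs : |α * l| = α * l := abs_of_pos hαl
          have hx1 : (α*l) ^ k ≤ 1 := pow_le_one₀ hαl.le hαl1
          have hmax : max (1 - |α * l| ^ (k : ℝ)) 0 = 1 - (α*l)^k := by
            rw [habs, Real.rpow_natCast, max_eq_left (by linarith)]
          rw [hmax]
          ring
        · rw [hnorm l, Set.indicator_of_notMem h]
          ring
      simp_rw [hpt]
      have : (∫⁻ l : ℝ, ENNReal.ofReal (α^(2*k) * (l ^ (2*k+2) * ‖φ l‖ ^ 2)))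
          = ENNReal.ofReal (α^(2*k)) * ENNReal.ofReal (8*Real.pi*R) := by
        simp_rw [fun l : ℝ => ENNReal.ofReal_mul
          (p := α^(2*k)) (q := l ^ (2*k+2) * ‖φ l‖ ^ 2) (by positivity)]
        rw [lintegral_const_mul' _ _ ENNReal.ofReal_ne_top, hlin2]
      rw [this, ← ENNReal.ofReal_mul (by positivity),
        ENNReal.toReal_ofReal (by positivity), hIh, hVeq]
  exact le_antisymm (csSup_le ⟨V, hwit⟩ hub) (le_csSup ⟨V, hub⟩ hwit)


lemma fmin (n : ℕ) (hn : 1 ≤ n) (A B : ℝ) (hA : 0 < A) (hB : 0 < B) :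
    sInf {v : ℝ | ∃ α : ℝ, 0 < α ∧ v = A * α ^ (2*n) + B / α}
      = (2*(n:ℝ)+1) * A ^ ((1:ℝ)/(2*(n:ℝ)+1)) * ((B/(2*(n:ℝ))) ^ (2*(n:ℝ)/(2*(n:ℝ)+1))) := by
  have hn' : (0:ℝ) < n := by exact_mod_cast hn
  set s : ℝ := 2*(n:ℝ)+1 with hsdef
  have hs : (0:ℝ) < s := by positivity
  set D : ℝ := B/(2*(n:ℝ)) with hDdef
  have hD : 0 < D := by positivity
  set M : ℝ := s * A ^ ((1:ℝ)/s) * D ^ (2*(n:ℝ)/s) with hMdef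
  have hBD : B = 2*(n:ℝ)*D := by rw [hDdef]; field_simp
  have hw : (1:ℝ)/s + 2*(n:ℝ)/s = 1 := by rw [hsdef]; field_simp; ring
  have e1 : 1 - 2*(n:ℝ)/s = 1/s := by rw [hsdef]; field_simp; ring
  have hlb : ∀ α : ℝ, 0 < α → M ≤ A * α ^ (2*n) + B / α := by
    intro α hα
    have hgm := Real.geom_mean_le_arith_mean2_weighted
      (by positivity : (0:ℝ) ≤ 1/s) (by positivity : (0:ℝ) ≤ 2*(n:ℝ)/s)
      (by positivity : (0:ℝ) ≤ s*A*α^(2*n)) (by positivity : (0:ℝ) ≤ s*D/α) hw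
    have he₁ : (1/s) * (s*A*α^(2*n)) = A * α^(2*n) := by field_simp
    have he₂ : (2*(n:ℝ)/s) * (s*D/α) = B / α := by rw [hBD]; field_simp
    have hgeq : (s*A*α^(2*n)) ^ ((1:ℝ)/s) * (s*D/α) ^ (2*(n:ℝ)/s) = M := by
      rw [Real.mul_rpow (by positivity) (by positivity),
          Real.mul_rpow hs.le hA.le,
          Real.div_rpow (by positivity) hα.le,
          Real.mul_rpow hs.le hD.le]
      have hαp : ((α^(2*n):ℝ)) ^ ((1:ℝ)/s) = α ^ (2*(n:ℝ)/s) := by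
        rw [← Real.rpow_natCast α (2*n), ← Real.rpow_mul hα.le]
        congr 1
        push_cast
        ring
      have hss : s ^ ((1:ℝ)/s) * s ^ (2*(n:ℝ)/s) = s := by
        rw [← Real.rpow_add hs, hw, Real.rpow_one]
      have hαd : α ^ (2*(n:ℝ)/s) / α ^ (2*(n:ℝ)/s) = 1 :=
        div_self (ne_of_gt (Real.rpow_pos_of_pos hα _))
      rw [hαp]
      calc s ^ ((1:ℝ)/s) * A ^ ((1:ℝ)/s) * α ^ (2*(n:ℝ)/s)
            * (s ^ (2*(n:ℝ)/s) * D ^ (2*(n:ℝ)/s) / α ^ (2*(n:ℝ)/s))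
          = (s ^ ((1:ℝ)/s) * s ^ (2*(n:ℝ)/s)) * A ^ ((1:ℝ)/s) * D ^ (2*(n:ℝ)/s)
            * (α ^ (2*(n:ℝ)/s) / α ^ (2*(n:ℝ)/s)) := by ring
        _ = M := by rw [hss, hαd, mul_one, hMdef]
    rw [← hgeq, ← he₁, ← he₂]
    exact hgm
  set α₀ : ℝ := (D/A) ^ ((1:ℝ)/s) with hα₀
  have hDA : (0:ℝ) < D/A := by positivity
  have hα₀pos : 0 < α₀ := Real.rpow_pos_of_pos hDA _
  have hval : A * α₀ ^ (2*n) + B / α₀ = M := by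
    have h1 : α₀ ^ (2*n) = (D/A) ^ (2*(n:ℝ)/s) := by
      rw [hα₀, ← Real.rpow_natCast _ (2*n), ← Real.rpow_mul hDA.le]
      congr 1
      push_cast
      ring
    have hterm1 : A * α₀ ^ (2*n) = A ^ ((1:ℝ)/s) * D ^ (2*(n:ℝ)/s) := by
      rw [h1, Real.div_rpow hD.le hA.le]
      calc A * (D ^ (2*(n:ℝ)/s) / A ^ (2*(n:ℝ)/s))
          = (A / A ^ (2*(n:ℝ)/s)) * D ^ (2*(n:ℝ)/s) := by ring
        _ = A ^ ((1:ℝ) - 2*(n:ℝ)/s) * D ^ (2*(n:ℝ)/s) := by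
            rw [Real.rpow_sub hA, Real.rpow_one]
        _ = A ^ ((1:ℝ)/s) * D ^ (2*(n:ℝ)/s) := by rw [e1]
    have hterm2 : B / α₀ = 2*(n:ℝ) * (A ^ ((1:ℝ)/s) * D ^ (2*(n:ℝ)/s)) := by
      rw [hα₀, Real.div_rpow hD.le hA.le, hBD]
      rw [div_div_eq_mul_div]
      calc 2*(n:ℝ)*D * A ^ ((1:ℝ)/s) / D ^ ((1:ℝ)/s)
          = 2*(n:ℝ) * A ^ ((1:ℝ)/s) * (D / D ^ ((1:ℝ)/s)) := by ring
        _ = 2*(n:ℝ) * A ^ ((1:ℝ)/s) * D ^ ((1:ℝ) - (1:ℝ)/s) := by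
            rw [Real.rpow_sub hD, Real.rpow_one]
        _ = 2*(n:ℝ) * (A ^ ((1:ℝ)/s) * D ^ (2*(n:ℝ)/s)) := by
            rw [show (1:ℝ) - (1:ℝ)/s = 2*(n:ℝ)/s by linarith [hw]]
            ring
    rw [hterm1, hterm2, hMdef]
    ring
  apply le_antisymm
  · exact csInf_le ⟨M, by rintro v ⟨α, hα, rfl⟩; exact hlb α hα⟩ ⟨α₀, hα₀pos, hval.symm⟩
  · exact le_csInf ⟨_, α₀, hα₀pos, rfl⟩ (by rintro v ⟨α, hα, rfl⟩; exact hlb α hα)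


/-- Pinsker-type minimax identity: the infimum over `α > 0` of the supremum over the
Sobolev-type ellipsoid `∫ λ^{2k+2}|φ(λ)|² dλ ≤ 8πR` of
`(1/2π)[T ∫ λ²(1 - h_{α,k}(λ))²|φ(λ)|² dλ + 4 ∫ h_{α,k}(λ)² dλ]` equals
`4 P(k,R) T^{1/(2k+1)}`, where `P(k,R)` is Pinsker's constant. -/
theorem stmt16 (k : ℕ) (hk : 1 ≤ k) (R T : ℝ) (hR : 0 < R) (hT : 0 < T) :
    sInf {v : ℝ | ∃ α : ℝ, 0 < α ∧
      v = sSup {r : ℝ | ∃ φ : ℝ → ℂ, MemLp φ 2 (volume : Measure ℝ) ∧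
        (∫⁻ l : ℝ, ENNReal.ofReal (l ^ (2 * k + 2) * ‖φ l‖ ^ 2))
          ≤ ENNReal.ofReal (8 * Real.pi * R) ∧
        r = (1 / (2 * Real.pi)) *
          (T * (∫⁻ l : ℝ, ENNReal.ofReal
                (l ^ 2 * (1 - max (1 - |α * l| ^ (k : ℝ)) 0) ^ 2 * ‖φ l‖ ^ 2)).toReal
            + 4 * ∫ l : ℝ, (max (1 - |α * l| ^ (k : ℝ)) 0) ^ 2)}}
      = 4 * ((2 * (k : ℝ) + 1) *
          ((k : ℝ) / (Real.pi * ((k : ℝ) + 1) * (2 * (k : ℝ) + 1))) ^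
            (2 * (k : ℝ) / (2 * (k : ℝ) + 1)) *
          R ^ ((1 : ℝ) / (2 * (k : ℝ) + 1))) *
        T ^ ((1 : ℝ) / (2 * (k : ℝ) + 1)) := by
  have hπ : 0 < Real.pi := Real.pi_pos
  have hk' : (0:ℝ) < k := by exact_mod_cast hk
  have hset : {v : ℝ | ∃ α : ℝ, 0 < α ∧
      v = sSup {r : ℝ | ∃ φ : ℝ → ℂ, MemLp φ 2 (volume : Measure ℝ) ∧
        (∫⁻ l : ℝ, ENNReal.ofReal (l ^ (2 * k + 2) * ‖φ l‖ ^ 2))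
          ≤ ENNReal.ofReal (8 * Real.pi * R) ∧
        r = (1 / (2 * Real.pi)) *
          (T * (∫⁻ l : ℝ, ENNReal.ofReal
                (l ^ 2 * (1 - max (1 - |α * l| ^ (k : ℝ)) 0) ^ 2 * ‖φ l‖ ^ 2)).toReal
            + 4 * ∫ l : ℝ, (max (1 - |α * l| ^ (k : ℝ)) 0) ^ 2)}}
      = {v : ℝ | ∃ α : ℝ, 0 < α ∧
          v = 4*R*T * α ^ (2*k) + (8*(k:ℝ)^2/(Real.pi*((k:ℝ)+1)*(2*(k:ℝ)+1))) / α} := by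
    ext v
    constructor
    · rintro ⟨α, hα, rfl⟩
      exact ⟨α, hα, ssup_eq k hk R T hR hT α hα⟩
    · rintro ⟨α, hα, rfl⟩
      exact ⟨α, hα, (ssup_eq k hk R T hR hT α hα).symm⟩
  rw [hset, fmin k hk (4*R*T) (8*(k:ℝ)^2/(Real.pi*((k:ℝ)+1)*(2*(k:ℝ)+1)))
    (by positivity) (by positivity)]
  set s : ℝ := 2*(k:ℝ)+1 with hsdef
  have hs : (0:ℝ) < s := by positivity
  have hB2k : (8*(k:ℝ)^2/(Real.pi*((k:ℝ)+1)*(2*(k:ℝ)+1)))/(2*(k:ℝ))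
      = 4 * ((k:ℝ)/(Real.pi*((k:ℝ)+1)*(2*(k:ℝ)+1))) := by
    field_simp
    ring
  rw [hB2k]
  have hX : (0:ℝ) ≤ (k:ℝ)/(Real.pi*((k:ℝ)+1)*(2*(k:ℝ)+1)) := by positivity
  rw [Real.mul_rpow (by norm_num : (0:ℝ) ≤ 4) hX,
    Real.mul_rpow (by positivity : (0:ℝ) ≤ 4*R) hT.le,
    Real.mul_rpow (by norm_num : (0:ℝ) ≤ 4) hR.le]
  have hw : (1:ℝ)/s + 2*(k:ℝ)/s = 1 := by rw [hsdef]; field_simp; ring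
  have h44 : (4:ℝ) ^ ((1:ℝ)/s) * 4 ^ (2*(k:ℝ)/s) = 4 := by
    rw [← Real.rpow_add (by norm_num), hw, Real.rpow_one]
  calc s * ((4:ℝ) ^ ((1:ℝ)/s) * R ^ ((1:ℝ)/s) * T ^ ((1:ℝ)/s)) *
        ((4:ℝ) ^ (2*(k:ℝ)/s) * ((k:ℝ)/(Real.pi*((k:ℝ)+1)*(2*(k:ℝ)+1))) ^ (2*(k:ℝ)/s))
      = ((4:ℝ) ^ ((1:ℝ)/s) * 4 ^ (2*(k:ℝ)/s)) *
        (s * ((k:ℝ)/(Real.pi*((k:ℝ)+1)*(2*(k:ℝ)+1))) ^ (2*(k:ℝ)/s) * R ^ ((1:ℝ)/s)) *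
        T ^ ((1:ℝ)/s) := by ring
    _ = 4 * (s * ((k:ℝ)/(Real.pi*((k:ℝ)+1)*(2*(k:ℝ)+1))) ^ (2*(k:ℝ)/s) * R ^ ((1:ℝ)/s)) *
        T ^ ((1:ℝ)/s) := by rw [h44]
end
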